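/- arXiv:0707.0376 — 5 statements merged into one kernel-verified Lean document; each statement's English description precedes it below -/
import Mathlib

section
/- Assume Ω satisfies the p-Sobolev–Poincaré inequality with constant C₀ for some p with 1 ≤ p ≤ n/(n−1). Then there is a constant C depending only on p and C₀ such that for every f ∈ W(Ω), every median r_f of f, and all 0 < t₁ < t₂, one has (t₂ − t₁) · |{x ∈ Ω : |f(x) − r_f| ≥ t₂}|^{1/p} ≤ C ∫_{{x ∈ Ω : t₁ < |f(x) − r_f| ≤ t₂}} |∇f(x)| dx. -/
open MeasureTheory Set
open scoped ENNReal NNReal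

noncomputable section

/-- The decreasing rearrangement of `u` with respect to the measure `μ`:
`u*(t) = inf { λ ≥ 0 : μ{|u| > λ} ≤ t }`. -/
def decRearr {α : Type*} [MeasurableSpace α] (μ : Measure α) (u : α → ℝ) (t : ℝ) : ℝ :=
  sInf {l : ℝ | 0 ≤ l ∧ μ {x | l < |u x|} ≤ ENNReal.ofReal t}

/-- `u**(t) = (1/t) ∫₀ᵗ u*(s) ds`. -/
def decRearrAvg {α : Type*} [MeasurableSpace α] (μ : Measure α) (u : α → ℝ) (t : ℝ) : ℝ :=
  (1 / t) * ∫ s in Ioc (0 : ℝ) t, decRearr μ u s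

abbrev Euc (n : ℕ) := EuclideanSpace ℝ (Fin n)

/-- `|∇f|(x)`, using the a.e. defined differential (Rademacher's theorem for
locally Lipschitz functions). -/
def gradNorm {n : ℕ} (f : Euc n → ℝ) (x : Euc n) : ℝ := ‖fderiv ℝ f x‖

/-- The admissible class `W(Ω)`: locally Lipschitz on `Ω`, with `f` and `|∇f|`
integrable on `Ω`. -/
def MemW {n : ℕ} (Ω : Set (Euc n)) (f : Euc n → ℝ) : Prop :=
  (∀ x ∈ Ω, ∃ s ∈ nhds x, ∃ K : ℝ≥0, LipschitzOnWith K f s) ∧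
    IntegrableOn f Ω ∧ IntegrableOn (gradNorm f) Ω

/-- `Ω` satisfies the `p`-Sobolev–Poincaré inequality with constant `C₀`. -/
def SPIneq {n : ℕ} (Ω : Set (Euc n)) (p C₀ : ℝ) : Prop :=
  ∀ f : Euc n → ℝ, MemW Ω f →
    (∫ x in Ω, |f x - ∫ y in Ω, f y| ^ p) ^ (1 / p) ≤ C₀ * ∫ x in Ω, gradNorm f x

/-- `r` is a median of `f` on `Ω` (with `|Ω| = 1`). -/
def IsMedian {n : ℕ} (Ω : Set (Euc n)) (f : Euc n → ℝ) (r : ℝ) : Prop :=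
  1 / 2 ≤ volume {x ∈ Ω | r ≤ f x} ∧ 1 / 2 ≤ volume {x ∈ Ω | f x ≤ r}

/-- Rademacher for locally Lipschitz functions on an open set. -/
lemma locLip_ae_diff {n : ℕ} {Ω : Set (Euc n)} (hΩ : IsOpen Ω) {f : Euc n → ℝ}
    (hf : ∀ x ∈ Ω, ∃ s ∈ nhds x, ∃ K : ℝ≥0, LipschitzOnWith K f s) :
    ∀ᵐ x ∂(volume.restrict Ω), DifferentiableAt ℝ f x := by
  have h' : ∀ x : Ω, ∃ U : Set (Euc n), IsOpen U ∧ (x : Euc n) ∈ U ∧ U ⊆ Ω ∧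
      ∃ K : ℝ≥0, LipschitzOnWith K f U := by
    rintro ⟨x, hx⟩
    obtain ⟨s, hs, K, hK⟩ := hf x hx
    exact ⟨interior s ∩ Ω, isOpen_interior.inter hΩ, ⟨mem_interior_iff_mem_nhds.2 hs, hx⟩,
      inter_subset_right, K, hK.mono (inter_subset_left.trans interior_subset)⟩
  choose U hUopen hxU hUΩ K hK using h'
  obtain ⟨T, hTc, hTU⟩ := TopologicalSpace.isOpen_iUnion_countable U hUopen
  have hae : ∀ᵐ x ∂(volume : Measure (Euc n)), ∀ i ∈ T, x ∈ U i → DifferentiableAt ℝ f x := by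
    rw [ae_ball_iff hTc]
    intro i _
    filter_upwards [(hK i).ae_differentiableWithinAt_of_mem] with x hx hxi
    exact (hx hxi).differentiableAt ((hUopen i).mem_nhds hxi)
  rw [ae_restrict_iff' hΩ.measurableSet]
  filter_upwards [hae] with x hx hxΩ
  have htu : x ∈ ⋃ i, U i := mem_iUnion.2 ⟨⟨x, hxΩ⟩, hxU _⟩
  rw [← hTU] at htu
  obtain ⟨i, hiT, hxi⟩ := mem_iUnion₂.1 htu
  exact hx i hiT hxi

/-- If `φ` is 1-Lipschitz and `f` is differentiable at `x`, then
`‖fderiv (φ ∘ f) x‖ ≤ ‖fderiv f x‖`. -/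
lemma norm_fderiv_comp_le {n : ℕ} {φ : ℝ → ℝ} (hφ : LipschitzWith 1 φ) {f : Euc n → ℝ}
    {x : Euc n} (hf : DifferentiableAt ℝ f x) :
    ‖fderiv ℝ (fun y => φ (f y)) x‖ ≤ ‖fderiv ℝ f x‖ := by
  by_cases hg : DifferentiableAt ℝ (fun y => φ (f y)) x
  · refine ContinuousLinearMap.opNorm_le_bound _ (norm_nonneg _) fun v => ?_
    have hcv : HasDerivAt (fun t : ℝ => x + t • v) v 0 := by
      simpa using ((hasDerivAt_id (0:ℝ)).smul_const v).const_add x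
    have hx0 : x + (0:ℝ) • v = x := by simp
    have hgx : HasFDerivAt (fun y => φ (f y)) (fderiv ℝ (fun y => φ (f y)) x)
        (x + (0:ℝ) • v) := by rw [hx0]; exact hg.hasFDerivAt
    have hfx : HasFDerivAt f (fderiv ℝ f x) (x + (0:ℝ) • v) := by
      rw [hx0]; exact hf.hasFDerivAt
    have hu : HasDerivAt (fun t : ℝ => φ (f (x + t • v)))
        (fderiv ℝ (fun y => φ (f y)) x v) 0 := hgx.comp_hasDerivAt (f := fun t : ℝ => x + t • v) 0 hcv
    have hw : HasDerivAt (fun t : ℝ => f (x + t • v)) (fderiv ℝ f x v) 0 :=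
      hfx.comp_hasDerivAt 0 hcv
    have hsu := (hasDerivAt_iff_tendsto_slope.1 hu).norm
    have hsw := (hasDerivAt_iff_tendsto_slope.1 hw).norm
    have key : ∀ t : ℝ, ‖slope (fun t : ℝ => φ (f (x + t • v))) 0 t‖
        ≤ ‖slope (fun t : ℝ => f (x + t • v)) 0 t‖ := by
      intro t
      rw [slope, slope, norm_smul, norm_smul]
      refine mul_le_mul_of_nonneg_left ?_ (norm_nonneg _)
      have hd := hφ.dist_le_mul (f (x + t • v)) (f (x + (0:ℝ) • v))
      simpa [Real.dist_eq, vsub_eq_sub] using hd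
    have hle : ‖fderiv ℝ (fun y => φ (f y)) x v‖ ≤ ‖fderiv ℝ f x v‖ :=
      le_of_tendsto_of_tendsto' hsu hsw fun t => key t
    exact hle.trans ((fderiv ℝ f x).le_opNorm v)
  · rw [fderiv_zero_of_not_differentiableAt hg]
    simp

lemma meas_closed {n : ℕ} {Ω : Set (Euc n)} (hΩ : IsOpen Ω) {f : Euc n → ℝ}
    (hfc : ContinuousOn f Ω) {C : Set ℝ} (hC : IsClosed C) :
    MeasurableSet (Ω ∩ f ⁻¹' C) := by
  have : Ω ∩ f ⁻¹' C = Ω \ (Ω ∩ f ⁻¹' Cᶜ) := by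
    ext x; by_cases hx : f x ∈ C <;> simp [hx]
  rw [this]
  exact hΩ.measurableSet.diff (hfc.isOpen_inter_preimage hΩ hC.isOpen_compl).measurableSet

lemma meas_open {n : ℕ} {Ω : Set (Euc n)} (hΩ : IsOpen Ω) {f : Euc n → ℝ}
    (hfc : ContinuousOn f Ω) {O : Set ℝ} (hO : IsOpen O) :
    MeasurableSet (Ω ∩ f ⁻¹' O) :=
  (hfc.isOpen_inter_preimage hΩ hO).measurableSet

/-- Main half lemma: truncation argument for the positive part. -/
lemma half {n : ℕ} (p C₀ : ℝ) (hp : 1 ≤ p) (hC₀ : 0 < C₀) {Ω : Set (Euc n)}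
    (hΩ : IsOpen Ω) (hvol : volume Ω = 1) (hSP : SPIneq Ω p C₀) {f : Euc n → ℝ}
    (hf : MemW Ω f) {r : ℝ} (hmed : 1 / 2 ≤ volume {x ∈ Ω | f x ≤ r})
    {t₁ t₁' t₂ : ℝ} (ht₁ : 0 < t₁) (h1 : t₁ < t₁') (h2 : t₁' < t₂) :
    (t₂ - t₁') * ((volume {x ∈ Ω | t₂ ≤ f x - r}).toReal) ^ (1 / p)
      ≤ 2 * C₀ * ∫ x in {x ∈ Ω | t₁ < f x - r ∧ f x - r ≤ t₂}, gradNorm f x := by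
  have hp0 : (0:ℝ) < p := lt_of_lt_of_le one_pos hp
  set c : ℝ := t₂ - t₁' with hc_def
  have hc : 0 < c := by simp [hc_def]; linarith
  set φ : ℝ → ℝ := fun s => min (max (s - (r + t₁')) 0) c with hφ_def
  set g : Euc n → ℝ := fun x => φ (f x) with hg_def
  have hΩm : MeasurableSet Ω := hΩ.measurableSet
  -- φ facts
  have hφ1 : LipschitzWith 1 φ := by
    have l1 : LipschitzWith 1 fun s : ℝ => s - (r + t₁') :=
      LipschitzWith.of_dist_le_mul fun a b => by
        simp [Real.dist_eq, sub_sub_sub_cancel_right]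
    have l2 : LipschitzWith 1 fun s : ℝ => max s 0 := by
      simpa using LipschitzWith.id.max_const (0:ℝ)
    have l3 : LipschitzWith 1 fun s : ℝ => min s c := by
      simpa using LipschitzWith.id.min_const c
    have h := l3.comp (l2.comp l1); rw [one_mul, one_mul] at h; exact h
  have hφ_nonneg : ∀ s, 0 ≤ φ s := fun s => le_min (le_max_right _ _) hc.le
  have hφ_le : ∀ s, φ s ≤ c := fun s => min_le_right _ _
  have hφ_zero : ∀ s, s - r ≤ t₁' → φ s = 0 := by
    intro s hs
    have : max (s - (r + t₁')) 0 = 0 := max_eq_right (by linarith)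
    rw [hφ_def]; simp only []; rw [this]; exact min_eq_left hc.le
  have hφ_top : ∀ s, t₂ ≤ s - r → φ s = c := by
    intro s hs
    have h' : c ≤ s - (r + t₁') := by simp [hc_def]; linarith
    have : max (s - (r + t₁')) 0 = s - (r + t₁') := max_eq_left (le_trans hc.le h')
    rw [hφ_def]; simp only []; rw [this]; exact min_eq_right h'
  -- continuity of f on Ω
  have hca : ∀ x ∈ Ω, ContinuousAt f x := by
    intro x hx
    obtain ⟨s, hs, K, hK⟩ := hf.1 x hx
    exact hK.continuousOn.continuousAt hs
  have hfc : ContinuousOn f Ω := fun x hx => (hca x hx).continuousWithinAt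
  have hgc : ContinuousOn g Ω := hφ1.continuous.comp_continuousOn hfc
  -- sets
  set S : Set (Euc n) := {x ∈ Ω | t₂ ≤ f x - r} with hS_def
  set A : Set (Euc n) := {x ∈ Ω | t₁ < f x - r ∧ f x - r ≤ t₂} with hA_def
  set N : Set (Euc n) := {x ∈ Ω | f x ≤ r} with hN_def
  have hSΩ : S ⊆ Ω := fun x hx => hx.1
  have hAΩ : A ⊆ Ω := fun x hx => hx.1
  have hNΩ : N ⊆ Ω := fun x hx => hx.1
  have mS : MeasurableSet S := by
    have : S = Ω ∩ f ⁻¹' (Ici (r + t₂)) := by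
      ext x
      simp only [hS_def, mem_setOf_eq, mem_inter_iff, mem_preimage, mem_Ici]
      constructor
      · rintro ⟨hx, h⟩; exact ⟨hx, by linarith⟩
      · rintro ⟨hx, h⟩; exact ⟨hx, by linarith⟩
    rw [this]; exact meas_closed hΩ hfc isClosed_Ici
  have mA : MeasurableSet A := by
    have : A = (Ω ∩ f ⁻¹' (Ioi (r + t₁))) ∩ (Ω ∩ f ⁻¹' (Iic (r + t₂))) := by
      ext x
      simp only [hA_def, mem_setOf_eq, mem_inter_iff, mem_preimage, mem_Ioi, mem_Iic]
      constructor
      · rintro ⟨hx, ha, hb⟩; exact ⟨⟨hx, by linarith⟩, hx, by linarith⟩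
      · rintro ⟨⟨hx, ha⟩, -, hb⟩; exact ⟨hx, by linarith, by linarith⟩
    rw [this]
    exact (meas_open hΩ hfc isOpen_Ioi).inter (meas_closed hΩ hfc isClosed_Iic)
  have mN : MeasurableSet N := by
    have : N = Ω ∩ f ⁻¹' (Iic r) := rfl
    rw [this]; exact meas_closed hΩ hfc isClosed_Iic
  haveI : IsFiniteMeasure (volume.restrict Ω) :=
    ⟨by rw [Measure.restrict_apply_univ, hvol]; exact ENNReal.one_lt_top⟩
  -- measurability of g
  have hgm : AEStronglyMeasurable g (volume.restrict Ω) := hgc.aestronglyMeasurable hΩm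
  -- MemW g
  have hWg : MemW Ω g := by
    refine ⟨fun x hx => ?_, ?_, ?_⟩
    · obtain ⟨s, hs, K, hK⟩ := hf.1 x hx
      exact ⟨s, hs, 1 * K, hφ1.comp_lipschitzOnWith hK⟩
    · refine Integrable.mono' (integrable_const c) hgm ?_
      filter_upwards with x
      rw [Real.norm_eq_abs, abs_of_nonneg (hφ_nonneg _)]
      exact hφ_le _
    · refine Integrable.mono' hf.2.2 ((measurable_fderiv ℝ g).norm.aestronglyMeasurable) ?_
      filter_upwards [locLip_ae_diff hΩ hf.1] with x hdiff
      simp only [Real.norm_eq_abs, gradNorm, abs_norm]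
      exact norm_fderiv_comp_le hφ1 hdiff
  -- key pointwise a.e. bound
  have hkey : ∀ᵐ x ∂(volume.restrict Ω), gradNorm g x ≤ A.indicator (gradNorm f) x := by
    filter_upwards [locLip_ae_diff hΩ hf.1, ae_restrict_mem hΩm] with x hdiff hx
    have hind_nonneg : 0 ≤ A.indicator (gradNorm f) x :=
      indicator_nonneg (fun y _ => norm_nonneg _) x
    rcases lt_or_ge (f x) (r + t₁') with hcase | hcase
    · have hev : ∀ᶠ y in nhds x, f y ∈ Iio (r + t₁') :=
        (hca x hx).eventually_mem (Iio_mem_nhds hcase)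
      have heq : g =ᶠ[nhds x] fun _ => (0:ℝ) := by
        filter_upwards [hev] with y hy
        exact hφ_zero _ (by simp only [mem_Iio] at hy; linarith)
      have hz : fderiv ℝ g x = 0 := by
        rw [Filter.EventuallyEq.fderiv_eq heq]; exact fderiv_const_apply 0
      have : gradNorm g x = 0 := by rw [gradNorm, hz, norm_zero]
      rw [this]; exact hind_nonneg
    rcases lt_or_ge (r + t₂) (f x) with hcase2 | hcase2
    · have hev : ∀ᶠ y in nhds x, f y ∈ Ioi (r + t₂) :=
        (hca x hx).eventually_mem (Ioi_mem_nhds hcase2)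
      have heq : g =ᶠ[nhds x] fun _ => c := by
        filter_upwards [hev] with y hy
        exact hφ_top _ (by simp only [mem_Ioi] at hy; linarith)
      have hz : fderiv ℝ g x = 0 := by
        rw [Filter.EventuallyEq.fderiv_eq heq]; exact fderiv_const_apply c
      have : gradNorm g x = 0 := by rw [gradNorm, hz, norm_zero]
      rw [this]; exact hind_nonneg
    · have hxA : x ∈ A := ⟨hx, by linarith, by linarith⟩
      rw [indicator_of_mem hxA]
      exact norm_fderiv_comp_le hφ1 hdiff
  -- integral of gradNorm g bound
  have hIg : ∫ x in Ω, gradNorm g x ≤ ∫ x in A, gradNorm f x := by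
    have hint_ind : Integrable (A.indicator (gradNorm f)) (volume.restrict Ω) :=
      hf.2.2.indicator mA
    have h' := integral_mono_ae hWg.2.2 hint_ind hkey
    rwa [MeasureTheory.setIntegral_indicator mA,
      inter_eq_self_of_subset_right hAΩ] at h'
  -- Sobolev--Poincaré for g
  have hSPg := hSP g hWg
  set m : ℝ := ∫ y in Ω, g y with hm_def
  have hm0 : 0 ≤ m := setIntegral_nonneg hΩm fun x _ => hφ_nonneg _
  have hmc : m ≤ c / 2 := by
    have hb : ∀ᵐ x ∂(volume.restrict Ω), g x ≤ (Ω \ N).indicator (fun _ => c) x := by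
      rw [ae_restrict_iff' hΩm]
      filter_upwards with x hx
      by_cases hxN : x ∈ N
      · have hg0 : g x = 0 := hφ_zero _ (by have := hxN.2; linarith)
        rw [hg0]
        exact indicator_nonneg (fun y _ => hc.le) x
      · rw [indicator_of_mem (show x ∈ Ω \ N from ⟨hx, hxN⟩)]
        exact hφ_le _
    have hint_ind : Integrable ((Ω \ N).indicator fun _ => c) (volume.restrict Ω) :=
      (integrable_const c).indicator (hΩm.diff mN)
    have h1' := integral_mono_ae hWg.2.1 hint_ind hb
    rw [MeasureTheory.setIntegral_indicator (hΩm.diff mN),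
      inter_eq_self_of_subset_right diff_subset,
      MeasureTheory.setIntegral_const, smul_eq_mul] at h1'
    have hvolN : volume (Ω \ N) ≤ 1 / 2 := by
      have hNfin : volume N ≠ ∞ := by
        refine ne_top_of_le_ne_top ?_ (measure_mono hNΩ)
        rw [hvol]; exact ENNReal.one_ne_top
      rw [measure_diff hNΩ mN.nullMeasurableSet hNfin, hvol]
      calc (1:ℝ≥0∞) - volume N ≤ 1 - 1/2 := tsub_le_tsub_left hmed 1
        _ = 1/2 := ENNReal.sub_eq_of_eq_add (by norm_num)
          (by rw [ENNReal.div_add_div_same, one_add_one_eq_two,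
            ENNReal.div_self two_ne_zero ENNReal.ofNat_ne_top])
    have htr : (volume (Ω \ N)).toReal ≤ 1/2 := by
      have := ENNReal.toReal_mono (by norm_num) hvolN
      simpa using this
    calc m ≤ (volume (Ω \ N)).toReal * c := h1'
      _ ≤ (1/2) * c := by nlinarith [hc.le]
      _ = c / 2 := by ring
  -- integrability of |g - m|^p
  have hintBig : Integrable (fun x => |g x - m| ^ p) (volume.restrict Ω) := by
    have haesm : AEStronglyMeasurable (fun x => |g x - m| ^ p) (volume.restrict Ω) := by
      have hcont : ContinuousOn (fun x => |g x - m| ^ p) Ω := by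
        apply ContinuousOn.rpow_const ((hgc.sub continuousOn_const).abs)
        intro x _; right; exact hp0.le
      exact hcont.aestronglyMeasurable hΩm
    refine Integrable.mono' (integrable_const ((c + |m|) ^ p)) haesm ?_
    filter_upwards with x
    rw [Real.norm_eq_abs, abs_of_nonneg (Real.rpow_nonneg (abs_nonneg _) p)]
    refine Real.rpow_le_rpow (abs_nonneg _) ?_ hp0.le
    have h' : |g x - m| ≤ |g x| + |m| := by
      rw [sub_eq_add_neg]
      exact (abs_add_le _ _).trans (by rw [abs_neg])
    refine h'.trans ?_
    have := abs_of_nonneg (hφ_nonneg (f x))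
    have := hφ_le (f x)
    simp only [hg_def]
    gcongr
    rw [abs_of_nonneg (hφ_nonneg (f x))]
    exact hφ_le (f x)
  -- lower bound
  have hlow : (c/2) * ((volume S).toReal) ^ (1/p) ≤ (∫ x in Ω, |g x - m| ^ p) ^ (1/p) := by
    have hpt : ∀ᵐ x ∂(volume.restrict Ω),
        S.indicator (fun _ => (c/2) ^ p) x ≤ |g x - m| ^ p := by
      filter_upwards with x
      by_cases hxS : x ∈ S
      · rw [indicator_of_mem hxS]
        have hgx : g x = c := hφ_top _ hxS.2
        have hineq : c / 2 ≤ |g x - m| := by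
          rw [hgx, abs_of_nonneg (by linarith)]
          linarith
        exact Real.rpow_le_rpow (by linarith) hineq hp0.le
      · rw [indicator_of_notMem hxS]
        exact Real.rpow_nonneg (abs_nonneg _) p
    have hint_ind : Integrable (S.indicator fun _ => (c/2) ^ p) (volume.restrict Ω) :=
      (integrable_const _).indicator mS
    have h2' := integral_mono_ae hint_ind hintBig hpt
    rw [MeasureTheory.setIntegral_indicator mS, inter_eq_self_of_subset_right hSΩ,
      MeasureTheory.setIntegral_const, smul_eq_mul] at h2'
    have h3' := Real.rpow_le_rpow (by positivity) h2' (by positivity : (0:ℝ) ≤ 1/p)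
    have hcp : (((c:ℝ)/2) ^ p) ^ (1/p) = c/2 := by
      rw [← Real.rpow_mul (by linarith), mul_one_div, div_self hp0.ne', Real.rpow_one]
    calc (c/2) * ((volume S).toReal) ^ (1/p)
        = ((volume S).toReal * (c/2) ^ p) ^ (1/p) := by
          rw [Real.mul_rpow ENNReal.toReal_nonneg (Real.rpow_nonneg (by linarith) p), hcp]
          ring
      _ ≤ (∫ x in Ω, |g x - m| ^ p) ^ (1/p) := h3'
  -- final chain
  have hfinal : C₀ * ∫ x in Ω, gradNorm g x ≤ C₀ * ∫ x in A, gradNorm f x :=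
    mul_le_mul_of_nonneg_left hIg hC₀.le
  calc (t₂ - t₁') * (volume S).toReal ^ (1/p)
      = 2 * ((c/2) * (volume S).toReal ^ (1/p)) := by rw [hc_def]; ring
    _ ≤ 2 * ((∫ x in Ω, |g x - m| ^ p) ^ (1/p)) := by linarith [hlow]
    _ ≤ 2 * (C₀ * ∫ x in Ω, gradNorm g x) := by linarith [hSPg]
    _ ≤ 2 * C₀ * ∫ x in A, gradNorm f x := by linarith [hfinal]

/-- If `Ω` satisfies the `p`-Sobolev–Poincaré inequality with constant `C₀`
(`1 ≤ p ≤ n/(n−1)`), then there is `C = C(p, C₀)` such that for every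
`f ∈ W(Ω)`, every median `r` of `f` and all `0 < t₁ < t₂`:
`(t₂ − t₁)·|{|f − r| ≥ t₂}|^{1/p} ≤ C ∫_{t₁ < |f − r| ≤ t₂} |∇f|`. -/
theorem stmt1 (p C₀ : ℝ) (hp : 1 ≤ p) (hC₀ : 0 < C₀) :
    ∃ C : ℝ, 0 < C ∧ ∀ n : ℕ, 2 ≤ n → ∀ Ω : Set (Euc n),
      IsOpen Ω → IsConnected Ω → volume Ω = 1 → p ≤ (n : ℝ) / ((n : ℝ) - 1) →
      SPIneq Ω p C₀ →
      ∀ f : Euc n → ℝ, MemW Ω f → ∀ r : ℝ, IsMedian Ω f r →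
      ∀ t₁ t₂ : ℝ, 0 < t₁ → t₁ < t₂ →
        (t₂ - t₁) * (volume {x ∈ Ω | t₂ ≤ |f x - r|}).toReal ^ (1 / p)
          ≤ C * ∫ x in {x ∈ Ω | t₁ < |f x - r| ∧ |f x - r| ≤ t₂}, gradNorm f x := by
  have hp0 : (0:ℝ) < p := lt_of_lt_of_le one_pos hp
  refine ⟨2 * C₀, by positivity, ?_⟩
  intro n hn Ω hΩ hconn hvol hpn hSP f hf r hmed t₁ t₂ ht₁ ht12
  have hΩm : MeasurableSet Ω := hΩ.measurableSet
  -- continuity of f on Ω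
  have hca : ∀ x ∈ Ω, ContinuousAt f x := by
    intro x hx
    obtain ⟨s, hs, K, hK⟩ := hf.1 x hx
    exact hK.continuousOn.continuousAt hs
  have hfc : ContinuousOn f Ω := fun x hx => (hca x hx).continuousWithinAt
  -- the negated function
  have hneglip : LipschitzWith 1 (fun a : ℝ => -a) :=
    LipschitzWith.of_dist_le_mul fun a b => by
      simp [Real.dist_eq, neg_sub_neg, abs_sub_comm]
  have hgd : gradNorm (fun x => -f x) = gradNorm f := by
    funext x; rw [gradNorm, gradNorm, fderiv_fun_neg, norm_neg]
  have hfneg : MemW Ω (fun x => -f x) := by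
    refine ⟨fun x hx => ?_, hf.2.1.neg, by rw [hgd]; exact hf.2.2⟩
    obtain ⟨s, hs, K, hK⟩ := hf.1 x hx
    exact ⟨s, hs, 1 * K, hneglip.comp_lipschitzOnWith hK⟩
  have hmedneg : 1 / 2 ≤ volume {x ∈ Ω | (fun x => -f x) x ≤ -r} := by
    have he : {x ∈ Ω | (fun x => -f x) x ≤ -r} = {x ∈ Ω | r ≤ f x} := by
      ext x
      simp only [mem_setOf_eq]
      constructor
      · rintro ⟨hx, h⟩; exact ⟨hx, by linarith⟩
      · rintro ⟨hx, h⟩; exact ⟨hx, by linarith⟩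
    rw [he]; exact hmed.1
  -- sets
  set Sp : Set (Euc n) := {x ∈ Ω | t₂ ≤ f x - r} with hSp_def
  set Sm : Set (Euc n) := {x ∈ Ω | t₂ ≤ r - f x} with hSm_def
  set B : Set (Euc n) := {x ∈ Ω | t₁ < |f x - r| ∧ |f x - r| ≤ t₂} with hB_def
  set V : Set (Euc n) := {x ∈ Ω | t₂ ≤ |f x - r|} with hV_def
  have mSp : MeasurableSet Sp := by
    have : Sp = Ω ∩ f ⁻¹' (Ici (r + t₂)) := by
      ext x
      simp only [hSp_def, mem_setOf_eq, mem_inter_iff, mem_preimage, mem_Ici]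
      constructor
      · rintro ⟨hx, h⟩; exact ⟨hx, by linarith⟩
      · rintro ⟨hx, h⟩; exact ⟨hx, by linarith⟩
    rw [this]; exact meas_closed hΩ hfc isClosed_Ici
  have mSm : MeasurableSet Sm := by
    have : Sm = Ω ∩ f ⁻¹' (Iic (r - t₂)) := by
      ext x
      simp only [hSm_def, mem_setOf_eq, mem_inter_iff, mem_preimage, mem_Iic]
      constructor
      · rintro ⟨hx, h⟩; exact ⟨hx, by linarith⟩
      · rintro ⟨hx, h⟩; exact ⟨hx, by linarith⟩
    rw [this]; exact meas_closed hΩ hfc isClosed_Iic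
  -- the integral over B is nonnegative
  have hBsub : B ⊆ Ω := fun x hx => hx.1
  have hBint : IntegrableOn (gradNorm f) B := hf.2.2.mono_set hBsub
  set R : ℝ := ∫ x in B, gradNorm f x with hR_def
  have hR0 : 0 ≤ R := by
    rw [hR_def]
    apply setIntegral_nonneg_of_ae_restrict
    filter_upwards with x
    exact norm_nonneg _
  -- volumes
  have hfin : ∀ s : Set (Euc n), s ⊆ Ω → volume s ≠ ∞ := by
    intro s hs
    refine ne_top_of_le_ne_top ?_ (measure_mono hs)
    rw [hvol]; exact ENNReal.one_ne_top
  -- key estimate for every intermediate t₁'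
  have key : ∀ t₁' : ℝ, t₁ < t₁' → t₁' < t₂ →
      (t₂ - t₁') * (volume V).toReal ^ (1 / p) ≤ 2 * C₀ * R := by
    intro t₁' h1 h2
    have Hp := half p C₀ hp hC₀ hΩ hvol hSP hf hmed.2 ht₁ h1 h2
    have Hm := half p C₀ hp hC₀ hΩ hvol hSP hfneg hmedneg ht₁ h1 h2
    rw [hgd] at Hm
    -- rewrite sets in Hm
    have e1 : {x ∈ Ω | t₂ ≤ (fun x => -f x) x - -r} = Sm := by
      ext x
      simp only [hSm_def, mem_setOf_eq]
      constructor
      · rintro ⟨hx, h⟩; exact ⟨hx, by linarith⟩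
      · rintro ⟨hx, h⟩; exact ⟨hx, by linarith⟩
    rw [e1] at Hm
    -- the A sets
    set Ap : Set (Euc n) := {x ∈ Ω | t₁ < f x - r ∧ f x - r ≤ t₂} with hAp_def
    have e2 : {x ∈ Ω | t₁ < (fun x => -f x) x - -r ∧ (fun x => -f x) x - -r ≤ t₂}
        = {x ∈ Ω | t₁ < r - f x ∧ r - f x ≤ t₂} := by
      ext x
      simp only [mem_setOf_eq]
      constructor
      · rintro ⟨hx, ha, hb⟩; exact ⟨hx, by linarith, by linarith⟩
      · rintro ⟨hx, ha, hb⟩; exact ⟨hx, by linarith, by linarith⟩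
    rw [e2] at Hm
    set Am : Set (Euc n) := {x ∈ Ω | t₁ < r - f x ∧ r - f x ≤ t₂} with hAm_def
    -- measurability of Ap, Am
    have mAp : MeasurableSet Ap := by
      have : Ap = (Ω ∩ f ⁻¹' (Ioi (r + t₁))) ∩ (Ω ∩ f ⁻¹' (Iic (r + t₂))) := by
        ext x
        simp only [hAp_def, mem_setOf_eq, mem_inter_iff, mem_preimage, mem_Ioi, mem_Iic]
        constructor
        · rintro ⟨hx, ha, hb⟩; exact ⟨⟨hx, by linarith⟩, hx, by linarith⟩
        · rintro ⟨⟨hx, ha⟩, -, hb⟩; exact ⟨hx, by linarith, by linarith⟩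
      rw [this]
      exact (meas_open hΩ hfc isOpen_Ioi).inter (meas_closed hΩ hfc isClosed_Iic)
    have mAm : MeasurableSet Am := by
      have : Am = (Ω ∩ f ⁻¹' (Iio (r - t₁))) ∩ (Ω ∩ f ⁻¹' (Ici (r - t₂))) := by
        ext x
        simp only [hAm_def, mem_setOf_eq, mem_inter_iff, mem_preimage, mem_Iio, mem_Ici]
        constructor
        · rintro ⟨hx, ha, hb⟩; exact ⟨⟨hx, by linarith⟩, hx, by linarith⟩
        · rintro ⟨⟨hx, ha⟩, -, hb⟩; exact ⟨hx, by linarith, by linarith⟩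
      rw [this]
      exact (meas_open hΩ hfc isOpen_Iio).inter (meas_closed hΩ hfc isClosed_Ici)
    -- A sets are disjoint and contained in B
    have hdisj : Disjoint Ap Am := by
      rw [disjoint_left]
      rintro x ⟨-, ha, -⟩ ⟨-, hc, -⟩
      linarith
    have hApB : Ap ⊆ B := by
      rintro x ⟨hx, ha, hb⟩
      refine ⟨hx, ?_, ?_⟩
      · calc t₁ < f x - r := ha
          _ ≤ |f x - r| := le_abs_self _
      · rw [abs_of_nonneg (by linarith)]; exact hb
    have hAmB : Am ⊆ B := by
      rintro x ⟨hx, ha, hb⟩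
      refine ⟨hx, ?_, ?_⟩
      · calc t₁ < r - f x := ha
          _ ≤ |f x - r| := by rw [abs_sub_comm]; exact le_abs_self _
      · rw [abs_sub_comm, abs_of_nonneg (by linarith)]; exact hb
    -- sum of integrals
    have hsum : (∫ x in Ap, gradNorm f x) + (∫ x in Am, gradNorm f x) ≤ R := by
      rw [← MeasureTheory.setIntegral_union hdisj mAm
        (hf.2.2.mono_set (hApB.trans hBsub)) (hf.2.2.mono_set (hAmB.trans hBsub))]
      apply setIntegral_mono_set hBint
      · filter_upwards with x; exact norm_nonneg _
      · exact HasSubset.Subset.eventuallyLE (union_subset hApB hAmB)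
    -- volume subadditivity
    have hVsub : volume V ≤ volume Sp + volume Sm := by
      refine le_trans (measure_mono ?_) (measure_union_le Sp Sm)
      rintro x ⟨hx, habs⟩
      rcases le_or_gt 0 (f x - r) with hsgn | hsgn
      · left; exact ⟨hx, by rwa [abs_of_nonneg hsgn] at habs⟩
      · right; refine ⟨hx, ?_⟩
        rw [abs_of_neg hsgn] at habs; linarith
    have hVr : (volume V).toReal ^ (1/p) ≤
        (volume Sp).toReal ^ (1/p) + (volume Sm).toReal ^ (1/p) := by
      rw [ENNReal.toReal_rpow, ENNReal.toReal_rpow, ENNReal.toReal_rpow]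
      rw [← ENNReal.toReal_add
        (ENNReal.rpow_ne_top_of_nonneg (by positivity) (hfin Sp fun x hx => hx.1))
        (ENNReal.rpow_ne_top_of_nonneg (by positivity) (hfin Sm fun x hx => hx.1))]
      apply ENNReal.toReal_mono
      · exact ENNReal.add_ne_top.2 ⟨ENNReal.rpow_ne_top_of_nonneg (by positivity)
          (hfin Sp fun x hx => hx.1), ENNReal.rpow_ne_top_of_nonneg (by positivity)
          (hfin Sm fun x hx => hx.1)⟩
      calc volume V ^ (1/p) ≤ (volume Sp + volume Sm) ^ (1/p) :=
            ENNReal.rpow_le_rpow hVsub (by positivity)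
        _ ≤ volume Sp ^ (1/p) + volume Sm ^ (1/p) :=
            ENNReal.rpow_add_le_add_rpow _ _ (by positivity)
              (by rw [div_le_one hp0]; exact hp)
    -- combine
    have ht2 : (0:ℝ) ≤ t₂ - t₁' := by linarith
    calc (t₂ - t₁') * (volume V).toReal ^ (1/p)
        ≤ (t₂ - t₁') * ((volume Sp).toReal ^ (1/p) + (volume Sm).toReal ^ (1/p)) :=
          mul_le_mul_of_nonneg_left hVr ht2
      _ = (t₂ - t₁') * (volume Sp).toReal ^ (1/p)
          + (t₂ - t₁') * (volume Sm).toReal ^ (1/p) := by ring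
      _ ≤ 2 * C₀ * (∫ x in Ap, gradNorm f x) + 2 * C₀ * (∫ x in Am, gradNorm f x) :=
          add_le_add Hp Hm
      _ = 2 * C₀ * ((∫ x in Ap, gradNorm f x) + (∫ x in Am, gradNorm f x)) := by ring
      _ ≤ 2 * C₀ * R := by nlinarith [hsum]
  -- limiting argument t₁' → t₁
  set K : ℝ := (volume V).toReal ^ (1/p) with hK_def
  have hK0 : 0 ≤ K := by positivity
  by_contra hcon
  push_neg at hcon
  have hKpos : 0 < K := by
    rcases hK0.lt_or_eq with h | h
    · exact h
    · exfalso
      rw [← h] at hcon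
      simp only [mul_zero] at hcon
      have := key ((t₁ + t₂)/2) (by linarith) (by linarith)
      rw [← h, mul_zero] at this
      nlinarith
  set d : ℝ := ((t₂ - t₁) * K - 2 * C₀ * R) / (2 * K) with hd_def
  have hd : 0 < d := by
    apply div_pos _ (by linarith)
    nlinarith
  set t₁' : ℝ := t₁ + min d ((t₂ - t₁)/2) with ht₁'_def
  have hmin1 : 0 < min d ((t₂ - t₁)/2) := lt_min hd (by linarith)
  have hmin2 : min d ((t₂ - t₁)/2) ≤ d := min_le_left _ _
  have hmin3 : min d ((t₂ - t₁)/2) ≤ (t₂ - t₁)/2 := min_le_right _ _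
  have h1 : t₁ < t₁' := by rw [ht₁'_def]; linarith
  have h2 : t₁' < t₂ := by rw [ht₁'_def]; linarith
  have hk := key t₁' h1 h2
  rw [ht₁'_def] at hk
  have hdK : d * K = ((t₂ - t₁) * K - 2 * C₀ * R) / 2 := by
    rw [hd_def]; field_simp
  nlinarith [mul_le_mul_of_nonneg_right hmin2 hK0]
end
end

section
/- Let g, h : (0, ∞) → [0, ∞) be Lebesgue measurable and suppose there are constants C₁, C₂ > 0 such that g(s) ≤ C₁ h**(s) for all s > 0 and ∫₀^t g(s) ds ≤ C₂ ∫₀^t h*(s) ds for all t > 0. Then there is a constant c depending only on C₁ and C₂ such that ∫₀^t g*(s) ds ≤ c ∫₀^t h*(s) ds for all t > 0. -/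
open MeasureTheory Set
open scoped ENNReal NNReal

noncomputable section

local notation "μ₀" => Measure.restrict volume (Ioi (0:ℝ))

namespace Stmt7Aux

open Filter Topology


/-- distribution function -/
def DD (u : ℝ → ℝ) (l : ℝ) : ℝ≥0∞ := μ₀ {x | l < |u x|}

variable {u : ℝ → ℝ} {t t' l : ℝ}

lemma measurableSet_abs_lt (hu : Measurable u) (l : ℝ) :
    MeasurableSet {x : ℝ | l < |u x|} :=
  measurableSet_lt measurable_const hu.abs

lemma DD_eq (hu : Measurable u) (l : ℝ) :
    DD u l = volume ({x : ℝ | l < |u x|} ∩ Ioi 0) :=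
  Measure.restrict_apply (measurableSet_abs_lt hu l)

lemma decRearr_def (u : ℝ → ℝ) (t : ℝ) :
    decRearr μ₀ u t = sInf {l : ℝ | 0 ≤ l ∧ DD u l ≤ ENNReal.ofReal t} := rfl

lemma decRearr_nonneg (u : ℝ → ℝ) (t : ℝ) : 0 ≤ decRearr μ₀ u t :=
  Real.sInf_nonneg fun _ hx => hx.1

lemma SS_nonempty (hu : Measurable u) (hne : ∃ l₀, 0 ≤ l₀ ∧ DD u l₀ ≠ ∞) (ht : 0 < t) :
    ∃ l, 0 ≤ l ∧ DD u l ≤ ENNReal.ofReal t := by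
  obtain ⟨l₀, hl₀, hfin⟩ := hne
  have hTend :
      Tendsto (fun n : ℕ => DD u (l₀ + n)) atTop
        (𝓝 (μ₀ (⋂ n : ℕ, {x : ℝ | l₀ + (n : ℝ) < |u x|}))) := by
    apply tendsto_measure_iInter_atTop
    · exact fun n => (measurableSet_abs_lt hu _).nullMeasurableSet
    · intro m n hmn x hx
      simp only [mem_setOf_eq] at hx ⊢
      have : (m : ℝ) ≤ n := Nat.cast_le.2 hmn
      linarith
    · exact ⟨0, by rw [Nat.cast_zero, add_zero]; exact hfin⟩
  have hempty : (⋂ n : ℕ, {x : ℝ | l₀ + (n : ℝ) < |u x|}) = ∅ := by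
    ext x
    simp only [mem_iInter, mem_setOf_eq, mem_empty_iff_false, iff_false, not_forall, not_lt]
    obtain ⟨n, hn⟩ := exists_nat_gt (|u x| - l₀)
    exact ⟨n, by linarith⟩
  rw [hempty, measure_empty] at hTend
  have hev : ∀ᶠ n : ℕ in atTop, DD u (l₀ + n) < ENNReal.ofReal t :=
    hTend.eventually_lt_const (by simpa using ENNReal.ofReal_pos.2 ht)
  obtain ⟨n, hn⟩ := hev.exists
  exact ⟨l₀ + n, by positivity, hn.le⟩

lemma decRearr_le_iff (hu : Measurable u) (hne : ∃ l₀, 0 ≤ l₀ ∧ DD u l₀ ≠ ∞)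
    (ht : 0 < t) (hl : 0 ≤ l) :
    decRearr μ₀ u t ≤ l ↔ DD u l ≤ ENNReal.ofReal t := by
  constructor
  · intro hle
    have hS := SS_nonempty hu hne ht
    have hU : {x : ℝ | l < |u x|} = ⋃ n : ℕ, {x : ℝ | l + 1 / (n + 1) < |u x|} := by
      ext x
      simp only [mem_iUnion, mem_setOf_eq]
      constructor
      · intro hx
        obtain ⟨n, hn⟩ := exists_nat_one_div_lt (sub_pos.2 hx)
        exact ⟨n, by linarith⟩
      · rintro ⟨n, hn⟩
        have h1 : (0 : ℝ) < 1 / ((n : ℝ) + 1) := by positivity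
        linarith
    have hmono : Monotone fun n : ℕ => {x : ℝ | l + 1 / ((n : ℝ) + 1) < |u x|} := by
      intro m n hmn x hx
      simp only [mem_setOf_eq] at hx ⊢
      have h1 : (1 : ℝ) / ((n : ℝ) + 1) ≤ 1 / ((m : ℝ) + 1) := by
        apply one_div_le_one_div_of_le (by positivity)
        have : (m : ℝ) ≤ n := Nat.cast_le.2 hmn
        linarith
      linarith
    have : DD u l = ⨆ n : ℕ, DD u (l + 1 / ((n : ℝ) + 1)) := by
      unfold DD
      rw [hU]
      exact hmono.measure_iUnion
    rw [this]
    refine iSup_le fun n => ?_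
    have hpos1 : (0:ℝ) < 1 / ((n : ℝ) + 1) := by positivity
    have hlt : decRearr μ₀ u t < l + 1 / ((n : ℝ) + 1) :=
      lt_of_le_of_lt hle (by linarith)
    obtain ⟨m, hm, hmlt⟩ := exists_lt_of_csInf_lt hS hlt
    refine le_trans (measure_mono ?_) hm.2
    intro x hx
    simp only [mem_setOf_eq] at hx ⊢
    linarith
  · intro hD
    exact csInf_le ⟨0, fun x hx => hx.1⟩ ⟨hl, hD⟩

lemma decRearr_anti (hu : Measurable u) (ht : 0 < t) (htt' : t ≤ t') :
    decRearr μ₀ u t' ≤ decRearr μ₀ u t := by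
  by_cases hne : ∃ l₀, 0 ≤ l₀ ∧ DD u l₀ ≠ ∞
  · refine csInf_le_csInf ⟨0, fun x hx => hx.1⟩ (SS_nonempty hu hne ht) ?_
    rintro m ⟨h0, hD⟩
    exact ⟨h0, hD.trans (ENNReal.ofReal_le_ofReal htt')⟩
  · push_neg at hne
    have hempty : ∀ τ : ℝ, {m : ℝ | 0 ≤ m ∧ DD u m ≤ ENNReal.ofReal τ} = ∅ := by
      intro τ
      ext m
      simp only [mem_setOf_eq, mem_empty_iff_false, iff_false, not_and]
      intro h0 hle
      rw [hne m h0] at hle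
      exact (hle.trans_lt ENNReal.ofReal_lt_top).ne rfl
    rw [decRearr_def, decRearr_def, hempty, hempty, Real.sInf_empty]

lemma decRearr_nonpos_eq (u : ℝ → ℝ) (ht : t ≤ 0) : decRearr μ₀ u t = decRearr μ₀ u 0 := by
  unfold decRearr
  rw [ENNReal.ofReal_eq_zero.2 ht, ENNReal.ofReal_zero]

lemma decRearr_measurable (hu : Measurable u) : Measurable (decRearr μ₀ u) := by
  apply measurable_of_Ici
  intro c
  have hsplit : decRearr μ₀ u ⁻¹' Ici c
      = (Iic 0 ∩ decRearr μ₀ u ⁻¹' Ici c) ∪ (Ioi 0 ∩ decRearr μ₀ u ⁻¹' Ici c) := by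
    rw [← union_inter_distrib_right, Iic_union_Ioi, univ_inter]
  rw [hsplit]
  refine MeasurableSet.union ?_ (Set.OrdConnected.measurableSet ?_)
  · by_cases hc : c ≤ decRearr μ₀ u 0
    · have : Iic 0 ∩ decRearr μ₀ u ⁻¹' Ici c = Iic (0:ℝ) := by
        refine inter_eq_left.2 fun s hs => ?_
        rw [mem_preimage, mem_Ici, decRearr_nonpos_eq u hs]
        exact hc
      rw [this]; exact measurableSet_Iic
    · have : Iic 0 ∩ decRearr μ₀ u ⁻¹' Ici c = ∅ := by
        ext s
        simp only [mem_inter_iff, mem_Iic, mem_preimage, mem_Ici, mem_empty_iff_false,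
          iff_false, not_and]
        intro hs hc'
        rw [decRearr_nonpos_eq u hs] at hc'
        exact hc hc'
      rw [this]; exact MeasurableSet.empty
  · constructor
    rintro x ⟨hx, _⟩ y ⟨_, hyc⟩ z ⟨hxz, hzy⟩
    have hz : (0:ℝ) < z := lt_of_lt_of_le hx hxz
    exact ⟨hz, le_trans hyc (decRearr_anti hu hz hzy)⟩

end Stmt7Aux

namespace Stmt7Aux

lemma le_of_mem (u : ℝ → ℝ) {t l : ℝ} (hl : 0 ≤ l) (hD : DD u l ≤ ENNReal.ofReal t) :
    decRearr μ₀ u t ≤ l :=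
  csInf_le ⟨0, fun _ hx => hx.1⟩ ⟨hl, hD⟩

lemma vol_upper {u : ℝ → ℝ} {t l : ℝ} (hu : Measurable u)
    (hne : ∃ l₀, 0 ≤ l₀ ∧ DD u l₀ ≠ ∞) (hl : 0 < l) :
    volume ({s : ℝ | l < decRearr μ₀ u s} ∩ Ioc 0 t) ≤ DD u l := by
  by_cases hD : DD u l = ∞
  · rw [hD]; exact le_top
  · refine le_trans (measure_mono (?_ : _ ⊆ Ioo (0:ℝ) (DD u l).toReal)) ?_
    · rintro s ⟨hls, hs0, _⟩
      have hnot : ¬ decRearr μ₀ u s ≤ l := not_le.2 hls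
      rw [decRearr_le_iff hu hne hs0 hl.le] at hnot
      exact ⟨hs0, (ENNReal.ofReal_lt_iff_lt_toReal hs0.le hD).1 (not_le.1 hnot)⟩
    · rw [Real.volume_Ioo, sub_zero, ENNReal.ofReal_toReal hD]

lemma vol_lower {u : ℝ → ℝ} {t l : ℝ} (hu : Measurable u)
    (hne : ∃ l₀, 0 ≤ l₀ ∧ DD u l₀ ≠ ∞) (ht : 0 < t) (hl : 0 ≤ l) :
    min (ENNReal.ofReal t) (DD u l) ≤ volume ({s : ℝ | l < decRearr μ₀ u s} ∩ Ioc 0 t) := by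
  have key : ∀ s : ℝ, 0 < s → s ≤ t → ENNReal.ofReal s < DD u l →
      s ∈ {s : ℝ | l < decRearr μ₀ u s} ∩ Ioc 0 t := by
    intro s hs0 hst hsD
    refine ⟨?_, hs0, hst⟩
    simp only [mem_setOf_eq, ← not_le, decRearr_le_iff hu hne hs0 hl]
    exact not_le.2 hsD
  rcases le_total (ENNReal.ofReal t) (DD u l) with hcase | hcase
  · rw [min_eq_left hcase]
    calc ENNReal.ofReal t = volume (Ioo (0:ℝ) t) := by rw [Real.volume_Ioo, sub_zero]
      _ ≤ _ := measure_mono fun s hs => key s hs.1 hs.2.le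
          (lt_of_lt_of_le ((ENNReal.ofReal_lt_ofReal_iff ht).2 hs.2) hcase)
  · rw [min_eq_right hcase]
    have hD : DD u l ≠ ∞ := ne_top_of_le_ne_top ENNReal.ofReal_ne_top hcase
    have htR : (DD u l).toReal ≤ t := by
      have h2 := ENNReal.toReal_mono ENNReal.ofReal_ne_top hcase
      rwa [ENNReal.toReal_ofReal ht.le] at h2
    calc DD u l = volume (Ioo (0:ℝ) (DD u l).toReal) := by
          rw [Real.volume_Ioo, sub_zero, ENNReal.ofReal_toReal hD]
      _ ≤ _ := measure_mono fun s hs => key s hs.1 (le_trans hs.2.le htR)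
          ((ENNReal.ofReal_lt_iff_lt_toReal hs.1.le hD).2 hs.2)

end Stmt7Aux


open Stmt7Aux in
/-- Let `g, h : (0,∞) → [0,∞)` be measurable with `g ≤ C₁ h**` pointwise on
`(0,∞)` and `∫₀ᵗ g ≤ C₂ ∫₀ᵗ h*` for all `t > 0`. Then there is `c = c(C₁, C₂)`
with `∫₀ᵗ g* ≤ c ∫₀ᵗ h*` for all `t > 0`. Rearrangements are taken with respect
to Lebesgue measure on `(0,∞)`. -/
theorem stmt7 (C₁ C₂ : ℝ) (hC₁ : 0 < C₁) (hC₂ : 0 < C₂) :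
    ∃ c : ℝ, 0 < c ∧ ∀ g h : ℝ → ℝ, Measurable g → Measurable h →
      (∀ s ∈ Ioi (0 : ℝ), 0 ≤ g s) → (∀ s ∈ Ioi (0 : ℝ), 0 ≤ h s) →
      (∀ s ∈ Ioi (0 : ℝ), g s ≤ C₁ * decRearrAvg (volume.restrict (Ioi (0 : ℝ))) h s) →
      (∀ t ∈ Ioi (0 : ℝ), (∫ s in Ioc (0 : ℝ) t, g s)
          ≤ C₂ * ∫ s in Ioc (0 : ℝ) t, decRearr (volume.restrict (Ioi (0 : ℝ))) h s) →
      ∀ t ∈ Ioi (0 : ℝ),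
        (∫ s in Ioc (0 : ℝ) t, decRearr (volume.restrict (Ioi (0 : ℝ))) g s)
          ≤ c * ∫ s in Ioc (0 : ℝ) t, decRearr (volume.restrict (Ioi (0 : ℝ))) h s := by
  refine ⟨C₁ + C₂ + 1, by linarith, ?_⟩
  intro g h hg hh hg0 hh0 hgh hgH t ht'
  have ht : (0:ℝ) < t := ht'
  have hsm : Measurable (decRearr μ₀ h) := decRearr_measurable hh
  have gsm : Measurable (decRearr μ₀ g) := decRearr_measurable hg
  have hA0 : 0 ≤ ∫ s in Ioc (0:ℝ) t, decRearr μ₀ h s :=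
    setIntegral_nonneg measurableSet_Ioc fun x _ => decRearr_nonneg h x
  by_cases hHint : IntegrableOn (decRearr μ₀ h) (Ioc 0 t) volume
  case neg =>
    have hAvg0 : ∀ s : ℝ, 0 < s → decRearrAvg μ₀ h s = 0 := by
      intro s hs
      have hni : ¬ IntegrableOn (decRearr μ₀ h) (Ioc 0 s) volume := by
        intro hc
        rcases le_total t s with hts | hst
        · exact hHint (hc.mono_set (Ioc_subset_Ioc_right hts))
        · have hb : IntegrableOn (decRearr μ₀ h) (Ioc s t) volume := by
            apply Measure.integrableOn_of_bounded (M := decRearr μ₀ h s)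
            · rw [Real.volume_Ioc]; exact ENNReal.ofReal_ne_top
            · exact hsm.aestronglyMeasurable
            · refine (ae_restrict_iff' measurableSet_Ioc).2 (Filter.Eventually.of_forall ?_)
              intro x hx
              rw [Real.norm_eq_abs, abs_of_nonneg (decRearr_nonneg h x)]
              exact decRearr_anti hh hs hx.1.le
          have h2 := hc.union hb
          rw [Ioc_union_Ioc_eq_Ioc hs.le hst] at h2
          exact hHint h2
      rw [decRearrAvg, integral_undef hni, mul_zero]
    have hgz : ∀ s : ℝ, 0 < s → g s = 0 := by
      intro s hs
      have h1 := hgh s hs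
      rw [hAvg0 s hs, mul_zero] at h1
      exact le_antisymm h1 (hg0 s hs)
    have hG0 : ∀ s : ℝ, s ∈ Ioc (0:ℝ) t → decRearr μ₀ g s = 0 := by
      intro s hs
      refine le_antisymm ?_ (decRearr_nonneg g s)
      refine le_of_mem g le_rfl ?_
      have hes : {x : ℝ | (0:ℝ) < |g x|} ∩ Ioi 0 = ∅ := by
        ext x
        simp only [mem_inter_iff, mem_setOf_eq, mem_Ioi, mem_empty_iff_false, iff_false, not_and]
        intro hlt hx
        rw [hgz x hx, abs_zero] at hlt
        exact lt_irrefl _ hlt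
      rw [DD_eq hg, hes, measure_empty]
      exact zero_le
    rw [setIntegral_congr_fun measurableSet_Ioc hG0, integral_zero,
      integral_undef hHint, mul_zero]
  case pos =>
    have hHint' : ∀ x : ℝ, 0 < x → IntegrableOn (decRearr μ₀ h) (Ioc 0 x) volume := by
      intro x hx
      rcases le_total x t with hxt | htx
      · exact hHint.mono_set (Ioc_subset_Ioc_right hxt)
      · have hb : IntegrableOn (decRearr μ₀ h) (Ioc t x) volume := by
          apply Measure.integrableOn_of_bounded (M := decRearr μ₀ h t)
          · rw [Real.volume_Ioc]; exact ENNReal.ofReal_ne_top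
          · exact hsm.aestronglyMeasurable
          · refine (ae_restrict_iff' measurableSet_Ioc).2 (Filter.Eventually.of_forall ?_)
            intro y hy
            rw [Real.norm_eq_abs, abs_of_nonneg (decRearr_nonneg h y)]
            exact decRearr_anti hh ht hy.1.le
        have h2 := hHint.union hb
        rwa [Ioc_union_Ioc_eq_Ioc ht.le htx] at h2
    set A : ℝ := ∫ s in Ioc (0:ℝ) t, decRearr μ₀ h s with hA
    have havg : ∀ x : ℝ, t ≤ x → decRearrAvg μ₀ h x ≤ A / t := by
      intro x htx
      have hx : 0 < x := lt_of_lt_of_le ht htx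
      have hI2 : IntegrableOn (decRearr μ₀ h) (Ioc t x) volume :=
        (hHint' x hx).mono_set (Ioc_subset_Ioc_left ht.le)
      have hsplit : ∫ s in Ioc (0:ℝ) x, decRearr μ₀ h s
          = A + ∫ s in Ioc t x, decRearr μ₀ h s := by
        rw [hA, ← setIntegral_union (Ioc_disjoint_Ioc_of_le le_rfl) measurableSet_Ioc hHint hI2,
          Ioc_union_Ioc_eq_Ioc ht.le htx]
      have hB1 : ∫ s in Ioc t x, decRearr μ₀ h s ≤ (x - t) * decRearr μ₀ h t := by
        have h2 := setIntegral_mono_on hI2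
          (integrableOn_const (by rw [Real.volume_Ioc]; exact ENNReal.ofReal_ne_top))
          measurableSet_Ioc (fun y hy => decRearr_anti hh ht hy.1.le)
        rwa [setIntegral_const, Real.volume_real_Ioc_of_le htx,
          smul_eq_mul] at h2
      have hB2 : t * decRearr μ₀ h t ≤ A := by
        have h2 := setIntegral_mono_on
          (integrableOn_const (by rw [Real.volume_Ioc]; exact ENNReal.ofReal_ne_top))
          hHint measurableSet_Ioc (fun y hy => decRearr_anti hh hy.1 hy.2)
        rwa [setIntegral_const, Real.volume_real_Ioc_of_le ht.le, sub_zero,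
          smul_eq_mul, ← hA] at h2
      have hHt0 : 0 ≤ decRearr μ₀ h t := decRearr_nonneg h t
      have hBB : ∫ s in Ioc t x, decRearr μ₀ h s ≤ (x - t) * (A / t) := by
        refine le_trans hB1 (mul_le_mul_of_nonneg_left ?_ (by linarith))
        rw [le_div_iff₀ ht]
        linarith
      rw [decRearrAvg, hsplit]
      have hstep : (1/x) * (A + ∫ s in Ioc t x, decRearr μ₀ h s)
          ≤ (1/x) * (A + (x - t) * (A/t)) := by
        apply mul_le_mul_of_nonneg_left (by linarith) (by positivity)
      refine le_trans hstep (le_of_eq ?_)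
      field_simp
      ring
    set a : ℝ := C₁ * A / t with ha
    have ha0 : 0 ≤ a := by positivity
    have hga : ∀ x : ℝ, t < x → g x ≤ a := by
      intro x hx
      refine le_trans (hgh x (ht.trans hx)) ?_
      rw [ha, mul_div_assoc]
      exact mul_le_mul_of_nonneg_left (havg x hx.le) hC₁.le
    set r : ℝ → ℝ := fun x => max (g x - a) 0 with hrdef
    have hr : Measurable r := (hg.sub measurable_const).max measurable_const
    have hr0 : ∀ x, 0 ≤ r x := fun x => le_max_right _ _
    have hrg : ∀ x : ℝ, 0 < x → r x ≤ g x :=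
      fun x hx => max_le (sub_le_self _ ha0) (hg0 x hx)
    have hrt : ∀ x : ℝ, t < x → r x = 0 :=
      fun x hx => max_eq_right (sub_nonpos.2 (hga x hx))
    have hne_r : ∃ l₀, 0 ≤ l₀ ∧ DD r l₀ ≠ ∞ := by
      refine ⟨0, le_refl 0, ?_⟩
      rw [DD_eq hr]
      have hsub : {x : ℝ | (0:ℝ) < |r x|} ∩ Ioi 0 ⊆ Ioc 0 t := by
        rintro x ⟨hlt, hx⟩
        refine ⟨hx, ?_⟩
        by_contra hxt
        push_neg at hxt
        simp only [mem_setOf_eq] at hlt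
        rw [hrt x hxt, abs_zero] at hlt
        exact lt_irrefl _ hlt
      exact ne_top_of_le_ne_top (by rw [Real.volume_Ioc]; exact ENNReal.ofReal_ne_top)
        (measure_mono hsub)
    have hne_g : ∃ l₀, 0 ≤ l₀ ∧ DD g l₀ ≠ ∞ := by
      refine ⟨a, ha0, ?_⟩
      rw [DD_eq hg]
      have hsub : {x : ℝ | a < |g x|} ∩ Ioi 0 ⊆ Ioc 0 t := by
        rintro x ⟨hlt, hx⟩
        refine ⟨hx, ?_⟩
        by_contra hxt
        push_neg at hxt
        simp only [mem_setOf_eq] at hlt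
        rw [abs_of_nonneg (hg0 x (ht.trans hxt))] at hlt
        exact absurd (hga x hxt) (not_le.2 hlt)
      exact ne_top_of_le_ne_top (by rw [Real.volume_Ioc]; exact ENNReal.ofReal_ne_top)
        (measure_mono hsub)
    have hDDshift : ∀ l : ℝ, 0 ≤ l → DD g (a + l) = DD r l := by
      intro l hl
      rw [DD_eq hg, DD_eq hr]
      congr 1
      ext x
      simp only [mem_inter_iff, mem_setOf_eq, mem_Ioi]
      constructor
      · rintro ⟨hlt, hx⟩
        rw [abs_of_nonneg (hg0 x hx)] at hlt
        refine ⟨?_, hx⟩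
        rw [abs_of_nonneg (hr0 x), hrdef]
        exact lt_max_iff.2 (Or.inl (by linarith))
      · rintro ⟨hlt, hx⟩
        rw [abs_of_nonneg (hr0 x), hrdef] at hlt
        simp only at hlt
        refine ⟨?_, hx⟩
        rw [abs_of_nonneg (hg0 x hx)]
        rcases lt_max_iff.1 hlt with h1 | h2
        · linarith
        · linarith
    have claim1 : ∀ s : ℝ, 0 < s → decRearr μ₀ g s ≤ a + decRearr μ₀ r s := by
      intro s hs
      have hrs0 : 0 ≤ decRearr μ₀ r s := decRearr_nonneg r s
      refine le_of_mem g (by linarith) ?_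
      rw [show DD g (a + decRearr μ₀ r s) = DD r (decRearr μ₀ r s) from hDDshift _ hrs0]
      exact (decRearr_le_iff hr hne_r hs hrs0).1 le_rfl
    have hGint_eq : ∫ s in Ioc (0:ℝ) t, decRearr μ₀ g s
        = (∫⁻ s in Ioc (0:ℝ) t, ENNReal.ofReal (decRearr μ₀ g s)).toReal := by
      exact integral_eq_lintegral_of_nonneg_ae
        (Filter.Eventually.of_forall fun s => decRearr_nonneg g s)
        gsm.aestronglyMeasurable.restrict
    by_cases hgint : IntegrableOn g (Ioc 0 t) volume
    · have hRstar : ∫⁻ s in Ioc (0:ℝ) t, ENNReal.ofReal (decRearr μ₀ r s)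
          ≤ ENNReal.ofReal (C₂ * A) := by
        rw [lintegral_eq_lintegral_meas_lt (volume.restrict (Ioc (0:ℝ) t))
          (Filter.Eventually.of_forall fun s => decRearr_nonneg r s)
          (decRearr_measurable hr).aemeasurable.restrict]
        calc ∫⁻ l in Ioi (0:ℝ), (volume.restrict (Ioc (0:ℝ) t)) {s | l < decRearr μ₀ r s}
            ≤ ∫⁻ l in Ioi (0:ℝ), DD r l := by
              refine setLIntegral_mono' measurableSet_Ioi fun l hl => ?_
              rw [Measure.restrict_apply' measurableSet_Ioc]
              exact vol_upper hr hne_r hl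
          _ = ∫⁻ l in Ioi (0:ℝ), (μ₀ {x | l < r x} : ℝ≥0∞) := by
              refine setLIntegral_congr_fun measurableSet_Ioi
                (fun l hl => ?_)
              rw [DD_eq hr, Measure.restrict_apply (measurableSet_lt measurable_const hr)]
              congr 1
              ext x
              simp [abs_of_nonneg (hr0 x)]
          _ = ∫⁻ x, ENNReal.ofReal (r x) ∂μ₀ :=
              (lintegral_eq_lintegral_meas_lt _
                (Filter.Eventually.of_forall fun x => hr0 x) hr.aemeasurable.restrict).symm
          _ ≤ ENNReal.ofReal (C₂ * A) := by
              have hsplit2 : ∫⁻ x in Ioi (0:ℝ), ENNReal.ofReal (r x)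
                  = (∫⁻ x in Ioc (0:ℝ) t, ENNReal.ofReal (r x))
                    + ∫⁻ x in Ioi t, ENNReal.ofReal (r x) := by
                rw [← Ioc_union_Ioi_eq_Ioi ht.le]
                exact lintegral_union (μ := volume) (f := fun x => ENNReal.ofReal (r x)) measurableSet_Ioi ((Ioc_disjoint_Ioi (le_refl t)) : Disjoint (Ioc (0:ℝ) t) (Ioi t))
              have h2 : ∫⁻ x in Ioi t, ENNReal.ofReal (r x) = 0 := by
                rw [setLIntegral_congr_fun measurableSet_Ioi
                  (fun x hx => by
                    rw [hrt x hx, ENNReal.ofReal_zero])]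
                exact lintegral_zero
              rw [hsplit2, h2]
              refine le_trans (le_of_eq (add_zero _)) ?_
              calc ∫⁻ x in Ioc (0:ℝ) t, ENNReal.ofReal (r x)
                  ≤ ∫⁻ x in Ioc (0:ℝ) t, ENNReal.ofReal (g x) :=
                    setLIntegral_mono' measurableSet_Ioc fun x hx =>
                      ENNReal.ofReal_le_ofReal (hrg x hx.1)
                _ = ENNReal.ofReal (∫ x in Ioc (0:ℝ) t, g x) :=
                    (ofReal_integral_eq_lintegral_ofReal hgint
                      ((ae_restrict_iff' measurableSet_Ioc).2
                        (Filter.Eventually.of_forall fun x hx => hg0 x hx.1))).symm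
                _ ≤ ENNReal.ofReal (C₂ * A) := by
                    refine ENNReal.ofReal_le_ofReal ?_
                    have h3 := hgH t ht'
                    rw [← hA] at h3
                    exact h3
      have hLbound : ∫⁻ s in Ioc (0:ℝ) t, ENNReal.ofReal (decRearr μ₀ g s)
          ≤ ENNReal.ofReal ((C₁ + C₂) * A) := by
        calc ∫⁻ s in Ioc (0:ℝ) t, ENNReal.ofReal (decRearr μ₀ g s)
            ≤ ∫⁻ s in Ioc (0:ℝ) t,
                (ENNReal.ofReal a + ENNReal.ofReal (decRearr μ₀ r s)) := by
              refine setLIntegral_mono' measurableSet_Ioc fun s hs => ?_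
              rw [← ENNReal.ofReal_add ha0 (decRearr_nonneg r s)]
              exact ENNReal.ofReal_le_ofReal (claim1 s hs.1)
          _ = ENNReal.ofReal a * volume (Ioc (0:ℝ) t)
              + ∫⁻ s in Ioc (0:ℝ) t, ENNReal.ofReal (decRearr μ₀ r s) := by
              rw [lintegral_add_left measurable_const, setLIntegral_const]
          _ ≤ ENNReal.ofReal a * ENNReal.ofReal t + ENNReal.ofReal (C₂ * A) := by
              rw [Real.volume_Ioc, sub_zero]
              exact add_le_add le_rfl hRstar
          _ = ENNReal.ofReal ((C₁ + C₂) * A) := by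
              rw [← ENNReal.ofReal_mul ha0, ← ENNReal.ofReal_add (by positivity) (by positivity)]
              congr 1
              rw [ha]
              field_simp
      rw [hGint_eq]
      calc (∫⁻ s in Ioc (0:ℝ) t, ENNReal.ofReal (decRearr μ₀ g s)).toReal
          ≤ (ENNReal.ofReal ((C₁+C₂)*A)).toReal :=
            ENNReal.toReal_mono ENNReal.ofReal_ne_top hLbound
        _ = (C₁+C₂)*A := ENNReal.toReal_ofReal (by positivity)
        _ ≤ (C₁+C₂+1)*A := by nlinarith
    · have hgnn : (0:ℝ→ℝ) ≤ᵐ[volume.restrict (Ioc (0:ℝ) t)] g :=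
        (ae_restrict_iff' measurableSet_Ioc).2
          (Filter.Eventually.of_forall fun x hx => hg0 x hx.1)
      have hginf : ∫⁻ x in Ioc (0:ℝ) t, ENNReal.ofReal (g x) = ∞ := by
        by_contra hfin
        exact hgint ⟨hg.aestronglyMeasurable.restrict,
          (hasFiniteIntegral_iff_ofReal hgnn).2 (lt_top_iff_ne_top.2 hfin)⟩
      have hcomp : ∫⁻ x in Ioc (0:ℝ) t, ENNReal.ofReal (g x)
          ≤ ∫⁻ s in Ioc (0:ℝ) t, ENNReal.ofReal (decRearr μ₀ g s) := by
        rw [lintegral_eq_lintegral_meas_lt (volume.restrict (Ioc (0:ℝ) t)) hgnn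
            hg.aemeasurable.restrict,
          lintegral_eq_lintegral_meas_lt (volume.restrict (Ioc (0:ℝ) t))
            (Filter.Eventually.of_forall fun s => decRearr_nonneg g s)
            gsm.aemeasurable.restrict]
        refine setLIntegral_mono' measurableSet_Ioi fun l hl => ?_
        rw [Measure.restrict_apply' measurableSet_Ioc, Measure.restrict_apply' measurableSet_Ioc]
        refine le_trans (le_min ?_ ?_) (vol_lower hg hne_g ht hl.le)
        · refine le_trans (measure_mono inter_subset_right) ?_
          rw [Real.volume_Ioc, sub_zero]
        · rw [DD_eq hg]
          refine measure_mono ?_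
          rintro x ⟨hlt, hx1, hx2⟩
          refine ⟨?_, hx1⟩
          simp only [mem_setOf_eq] at hlt ⊢
          exact lt_of_lt_of_le hlt (le_abs_self _)
      have hLtop : ∫⁻ s in Ioc (0:ℝ) t, ENNReal.ofReal (decRearr μ₀ g s) = ∞ :=
        top_le_iff.1 (hginf ▸ hcomp)
      rw [hGint_eq, hLtop, ENNReal.toReal_top]
      positivity
end
end

section
/- Let g, h : (0, ∞) → [0, ∞) be Lebesgue measurable and suppose g(s) ≤ C₁ h**(s) for all s > 0, for some constant C₁ > 0. Then for every finite family of intervals (a_i, b_i), i = 1, …, m, with 0 < a₁ < b₁ ≤ a₂ < b₂ ≤ ⋯ ≤ a_m < b_m < ∞, one has Σ_{i=1}^m ∫_{a_i}^{b_i} g(s) ds ≤ C₁ (1 + Σ_{i=1}^m log(b_i / a_i)) ∫₀^{Σ_{i=1}^m (b_i − a_i)} h*(s) ds. -/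
open MeasureTheory Set
open scoped ENNReal NNReal

noncomputable section

lemma decRearr_nonneg {α : Type*} [MeasurableSpace α] (μ : Measure α) (u : α → ℝ) (t : ℝ) :
    0 ≤ decRearr μ u t :=
  Real.sInf_nonneg fun _ hx => hx.1

lemma decRearr_anti {α : Type*} [MeasurableSpace α] (μ : Measure α) (u : α → ℝ)
    (hu : Measurable u) {s t : ℝ} (hs : 0 < s) (hst : s ≤ t) :
    decRearr μ u t ≤ decRearr μ u s := by
  set S : ℝ → Set ℝ := fun r => {l : ℝ | 0 ≤ l ∧ μ {x | l < |u x|} ≤ ENNReal.ofReal r} with hS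
  have hsub : S s ⊆ S t := fun l hl => ⟨hl.1, hl.2.trans (ENNReal.ofReal_le_ofReal hst)⟩
  by_cases hne : (S s).Nonempty
  · exact csInf_le_csInf ⟨0, fun l hl => hl.1⟩ hne hsub
  · have hSt : S t = ∅ := by
      by_contra hc
      obtain ⟨l, hl0, hlm⟩ := nonempty_iff_ne_empty.2 hc
      have hmeas : ∀ n : ℕ, NullMeasurableSet {x | l + n < |u x|} μ :=
        fun n => (measurableSet_lt measurable_const hu.abs).nullMeasurableSet
      have hanti : Antitone (fun n : ℕ => {x | l + n < |u x|}) := by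
        intro n k hnk x hx
        simp only [mem_setOf_eq] at *
        have : (n : ℝ) ≤ k := by exact_mod_cast hnk
        linarith
      have hfin : ∃ n : ℕ, μ {x | l + n < |u x|} ≠ (⊤ : ℝ≥0∞) := by
        refine ⟨0, ?_⟩
        simp only [Nat.cast_zero, add_zero]
        exact (hlm.trans_lt ENNReal.ofReal_lt_top).ne
      have hinter : ⋂ n : ℕ, {x | l + (n:ℝ) < |u x|} = ∅ := by
        ext x
        simp only [mem_iInter, mem_setOf_eq, mem_empty_iff_false, iff_false, not_forall, not_lt]
        obtain ⟨n, hn⟩ := exists_nat_ge (|u x| - l)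
        exact ⟨n, by linarith⟩
      have htend := tendsto_measure_iInter_atTop hmeas hanti hfin
      rw [hinter, measure_empty] at htend
      have hpos : (0 : ℝ≥0∞) < ENNReal.ofReal s := ENNReal.ofReal_pos.2 hs
      have hev : ∀ᶠ n : ℕ in Filter.atTop, μ {x | l + n < |u x|} < ENNReal.ofReal s :=
        htend.eventually_lt_const hpos
      obtain ⟨n, hn⟩ := hev.exists
      exact absurd ⟨l + n, by positivity, hn.le⟩ hne
    have e1 : decRearr μ u t = sInf (S t) := rfl
    have e2 : decRearr μ u s = sInf (S s) := rfl
    rw [e1, e2, hSt, not_nonempty_iff_eq_empty.1 hne]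

/-- Let `g, h : (0,∞) → [0,∞)` be measurable with `g ≤ C₁ h**` pointwise on
`(0,∞)`. Then for every finite family of intervals `(aᵢ, bᵢ)` with
`0 < a₁ < b₁ ≤ a₂ < b₂ ≤ ⋯ ≤ a_m < b_m < ∞`:
`Σᵢ ∫_{aᵢ}^{bᵢ} g ≤ C₁ (1 + Σᵢ log(bᵢ/aᵢ)) ∫₀^{Σᵢ(bᵢ−aᵢ)} h*`. -/
theorem stmt9 (C₁ : ℝ) (hC₁ : 0 < C₁) (g h : ℝ → ℝ) (hg : Measurable g)
    (hh : Measurable h)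
    (hg0 : ∀ s ∈ Ioi (0 : ℝ), 0 ≤ g s) (hh0 : ∀ s ∈ Ioi (0 : ℝ), 0 ≤ h s)
    (hgh : ∀ s ∈ Ioi (0 : ℝ), g s ≤ C₁ * decRearrAvg (volume.restrict (Ioi (0 : ℝ))) h s)
    (m : ℕ) (a b : Fin m → ℝ)
    (ha : ∀ i, 0 < a i) (hab : ∀ i, a i < b i)
    (hchain : ∀ i j : Fin m, i < j → b i ≤ a j) :
    ∑ i, ∫ s in Ioc (a i) (b i), g s
      ≤ C₁ * (1 + ∑ i, Real.log (b i / a i)) *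
          ∫ s in Ioc (0 : ℝ) (∑ i, (b i - a i)),
            decRearr (volume.restrict (Ioi (0 : ℝ))) h s := by
  set μ₀ := volume.restrict (Ioi (0 : ℝ)) with hμ₀
  set u := decRearr μ₀ h with hu_def
  have hupos : ∀ t, 0 ≤ u t := decRearr_nonneg _ _
  have huanti : ∀ s t : ℝ, 0 < s → s ≤ t → u t ≤ u s := fun s t hs hst =>
    decRearr_anti _ _ hh hs hst
  have hintc : ∀ ε T : ℝ, 0 < ε → IntegrableOn u (Ioc ε T) volume := by
    intro ε T hε
    rcases le_or_gt ε T with hεT | hεT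
    · have hA : AntitoneOn u (Icc ε T) := fun x hx y hy hxy =>
        huanti x y (hε.trans_le hx.1) hxy
      exact (AntitoneOn.integrableOn_isCompact isCompact_Icc hA).mono_set Ioc_subset_Icc_self
    · rw [Ioc_eq_empty (not_lt.2 hεT.le)]
      exact integrableOn_empty
  rcases Nat.eq_zero_or_pos m with hm | hm
  · subst hm
    simp
  haveI : Nonempty (Fin m) := Fin.pos_iff_nonempty.1 hm
  have hL : 0 < ∑ i, (b i - a i) :=
    Finset.sum_pos (fun i _ => sub_pos.2 (hab i)) Finset.univ_nonempty
  by_cases HI : ∀ s : ℝ, 0 < s → IntegrableOn u (Ioc 0 s) volume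
  · -- main case
    set L := ∑ i, (b i - a i) with hLdef
    set A := ∫ t in Ioc (0 : ℝ) L, u t with hAdef
    have hA : 0 ≤ A := setIntegral_nonneg measurableSet_Ioc fun x _ => hupos x
    have key : ∀ s : ℝ, 0 < s → (∫ t in Ioc (0 : ℝ) s, u t) ≤ (1 + s / L) * A := by
      intro s hs
      rcases le_or_gt s L with hsL | hLs
      · have h1 : (∫ t in Ioc (0 : ℝ) s, u t) ≤ A :=
          setIntegral_mono_set (HI L hL) (Filter.Eventually.of_forall fun x => hupos x)
            (HasSubset.Subset.eventuallyLE (Ioc_subset_Ioc_right hsL))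
        nlinarith [div_nonneg hs.le hL.le]
      · have hsplit : (∫ t in Ioc (0 : ℝ) s, u t) = A + ∫ t in Ioc L s, u t := by
          rw [hAdef, ← setIntegral_union (Ioc_disjoint_Ioc_of_le le_rfl) measurableSet_Ioc
            (HI L hL) (hintc L s hL), Ioc_union_Ioc_eq_Ioc hL.le hLs.le]
        have hb1 : (∫ t in Ioc L s, u t) ≤ (s - L) * u L := by
          have h2 := setIntegral_mono_on (hintc L s hL)
            (integrableOn_const measure_Ioc_lt_top.ne) measurableSet_Ioc
            (fun x hx => huanti L x hL hx.1.le)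
          rwa [setIntegral_const, Real.volume_real_Ioc_of_le (by linarith),
            smul_eq_mul] at h2
        have hb2 : L * u L ≤ A := by
          have h2 := setIntegral_mono_on
            (integrableOn_const measure_Ioc_lt_top.ne) (HI L hL) measurableSet_Ioc
            (fun x hx => huanti x L hx.1 hx.2)
          rwa [setIntegral_const, Real.volume_real_Ioc_of_le hL.le, sub_zero,
            smul_eq_mul] at h2
        have huL : 0 ≤ u L := hupos L
        have h4 : (∫ t in Ioc L s, u t) ≤ s * A / L := by
          rw [le_div_iff₀ hL]
          nlinarith
        calc (∫ t in Ioc (0 : ℝ) s, u t) = A + ∫ t in Ioc L s, u t := hsplit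
          _ ≤ A + s * A / L := by linarith
          _ = (1 + s / L) * A := by field_simp
    have hFbound : ∀ i : Fin m, ∀ x ∈ Ioc (a i) (b i), g x ≤ C₁ * A * (x⁻¹ + L⁻¹) := by
      intro i x hx
      have hx0 : 0 < x := (ha i).trans hx.1
      have h1 := hgh x (mem_Ioi.2 hx0)
      have h2 : decRearrAvg μ₀ h x = (1 / x) * ∫ t in Ioc (0 : ℝ) x, u t := rfl
      rw [h2] at h1
      have h3 : (1 / x) * (∫ t in Ioc (0 : ℝ) x, u t) ≤ (1 / x) * ((1 + x / L) * A) := by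
        apply mul_le_mul_of_nonneg_left (key x hx0) (by positivity)
      calc g x ≤ C₁ * ((1 / x) * ∫ t in Ioc (0 : ℝ) x, u t) := h1
        _ ≤ C₁ * ((1 / x) * ((1 + x / L) * A)) := mul_le_mul_of_nonneg_left h3 hC₁.le
        _ = C₁ * A * (x⁻¹ + L⁻¹) := by field_simp
    have hgint : ∀ i : Fin m, IntegrableOn g (Ioc (a i) (b i)) volume := by
      intro i
      have hC : ∀ᵐ x ∂(volume.restrict (Ioc (a i) (b i))),
          ‖g x‖ ≤ C₁ * A * ((a i)⁻¹ + L⁻¹) := by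
        rw [ae_restrict_iff' measurableSet_Ioc]
        refine Filter.Eventually.of_forall fun x hx => ?_
        have hx0 : 0 < x := (ha i).trans hx.1
        rw [Real.norm_eq_abs, abs_of_nonneg (hg0 x (mem_Ioi.2 hx0))]
        refine (hFbound i x hx).trans ?_
        have hinv : x⁻¹ ≤ (a i)⁻¹ := by
          rw [inv_le_inv₀ hx0 (ha i)]
          exact hx.1.le
        nlinarith [mul_nonneg hC₁.le hA]
      exact Integrable.mono' (integrableOn_const measure_Ioc_lt_top.ne)
        hg.aestronglyMeasurable hC
    have hinvint : ∀ i : Fin m, IntegrableOn (fun x : ℝ => x⁻¹) (Ioc (a i) (b i)) volume := by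
      intro i
      refine IntegrableOn.mono_set ?_ Ioc_subset_Icc_self
      apply ContinuousOn.integrableOn_Icc
      apply ContinuousOn.inv₀ continuousOn_id
      intro x hx
      exact ne_of_gt ((ha i).trans_le hx.1)
    have hFint : ∀ i : Fin m,
        IntegrableOn (fun x : ℝ => C₁ * A * (x⁻¹ + L⁻¹)) (Ioc (a i) (b i)) volume := by
      intro i
      exact (((hinvint i).add (integrableOn_const measure_Ioc_lt_top.ne)).const_mul _)
    have hFval : ∀ i : Fin m, (∫ x in Ioc (a i) (b i), C₁ * A * (x⁻¹ + L⁻¹))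
        = C₁ * A * (Real.log (b i / a i) + (b i - a i) / L) := by
      intro i
      rw [MeasureTheory.integral_const_mul]
      congr 1
      rw [MeasureTheory.integral_add (hinvint i)
        (integrableOn_const measure_Ioc_lt_top.ne)]
      congr 1
      · rw [← intervalIntegral.integral_of_le (hab i).le]
        exact integral_inv (notMem_uIcc_of_lt (ha i) ((ha i).trans (hab i)))
      · rw [setIntegral_const, Real.volume_real_Ioc_of_le (by linarith [hab i]), smul_eq_mul, div_eq_mul_inv]
    calc ∑ i, ∫ s in Ioc (a i) (b i), g s
        ≤ ∑ i, C₁ * A * (Real.log (b i / a i) + (b i - a i) / L) := by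
          refine Finset.sum_le_sum fun i _ => ?_
          rw [← hFval i]
          exact setIntegral_mono_on (hgint i) (hFint i) measurableSet_Ioc (hFbound i)
      _ = C₁ * A * ((∑ i, Real.log (b i / a i)) + 1) := by
          have hsum : ∑ i, (Real.log (b i / a i) + (b i - a i) / L)
              = (∑ i, Real.log (b i / a i)) + (∑ i, (b i - a i)) / L := by
            rw [Finset.sum_add_distrib, Finset.sum_div]
          rw [← Finset.mul_sum, hsum, ← hLdef, div_self hL.ne']
      _ = C₁ * (1 + ∑ i, Real.log (b i / a i)) * A := by ring
  · -- degenerate case : u not integrable near 0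
    push_neg at HI
    obtain ⟨s₀, hs₀, hni⟩ := HI
    have hnone : ∀ s : ℝ, 0 < s → ¬ IntegrableOn u (Ioc 0 s) volume := by
      intro s hs hint'
      rcases le_total s₀ s with hle | hle
      · exact hni (hint'.mono_set (Ioc_subset_Ioc_right hle))
      · refine hni ?_
        rw [← Ioc_union_Ioc_eq_Ioc hs.le hle]
        exact hint'.union (hintc s s₀ hs)
    have hzero : ∀ s : ℝ, 0 < s → (∫ t in Ioc (0 : ℝ) s, u t) = 0 := fun s hs =>
      integral_undef (hnone s hs)
    have hgz : ∀ i : Fin m, (∫ s in Ioc (a i) (b i), g s) = 0 := by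
      intro i
      rw [setIntegral_congr_fun measurableSet_Ioc (g := fun _ => (0 : ℝ)) ?_, integral_zero]
      intro x hx
      have hx0 : 0 < x := (ha i).trans hx.1
      have h1 := hgh x (mem_Ioi.2 hx0)
      have h2 : decRearrAvg μ₀ h x = (1 / x) * ∫ t in Ioc (0 : ℝ) x, u t := rfl
      rw [h2, hzero x hx0, mul_zero, mul_zero] at h1
      exact le_antisymm h1 (hg0 x (mem_Ioi.2 hx0))
    rw [Finset.sum_eq_zero fun i _ => hgz i, hzero _ hL, mul_zero]
end
end

section
/- Let n ≥ 1, let γₙ denote the Lebesgue measure of the unit ball of ℝⁿ, and let B be the open ball of ℝⁿ centered at 0 with |B| = 1 (radius γₙ^{−1/n}). Let g : (0,1] → [0, ∞) be continuous, and define u : B → [0, ∞] by u(x) = ∫_{γₙ|x|ⁿ}^1 g(s) s^{1/n − 1} ds. Then: (a) the decreasing rearrangement of u satisfies u*(t) = ∫_t^1 s^{1/n} g(s) (ds/s) for every t ∈ (0,1); (b) u is differentiable at every x ∈ B ∖ {0} with |∇u(x)| = n γₙ^{1/n} g(γₙ|x|ⁿ). -/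
open MeasureTheory Set
open scoped ENNReal NNReal

noncomputable section

/-- The measure `γₙ` of the unit ball of `ℝⁿ`. -/
def unitBallVol (n : ℕ) : ℝ := (volume (Metric.ball (0 : Euc n) 1)).toReal

/-- Let `B` be the ball of `ℝⁿ` centered at `0` with `|B| = 1` (radius
`γₙ^{−1/n}`), let `g : (0,1] → [0,∞)` be continuous, and
`u(x) = ∫_{γₙ|x|ⁿ}¹ g(s) s^{1/n−1} ds`. Then (a) the decreasing rearrangement of
`u` on `B` is `u*(t) = ∫ₜ¹ s^{1/n} g(s) ds/s` for `t ∈ (0,1)`, and (b) `u` is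
differentiable on `B ∖ {0}` with `|∇u(x)| = n γₙ^{1/n} g(γₙ|x|ⁿ)`. -/
theorem stmt13 (n : ℕ) (hn : 1 ≤ n)
    (g : ℝ → ℝ) (hg : ContinuousOn g (Ioc (0 : ℝ) 1))
    (hg0 : ∀ s ∈ Ioc (0 : ℝ) 1, 0 ≤ g s)
    (u : Euc n → ℝ)
    (hu : ∀ x : Euc n,
      u x = ∫ s in Ioc (unitBallVol n * ‖x‖ ^ n) 1, g s * s ^ ((1 : ℝ) / n - 1)) :
    (∀ t ∈ Ioo (0 : ℝ) 1,
        decRearr (volume.restrict (Metric.ball (0 : Euc n) (unitBallVol n ^ (-(1 : ℝ) / n)))) u t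
          = ∫ s in Ioc t 1, s ^ ((1 : ℝ) / n) * g s / s) ∧
    (∀ x : Euc n, x ∈ Metric.ball (0 : Euc n) (unitBallVol n ^ (-(1 : ℝ) / n)) → x ≠ 0 →
        DifferentiableAt ℝ u x ∧
          ‖fderiv ℝ u x‖ = n * unitBallVol n ^ ((1 : ℝ) / n) * g (unitBallVol n * ‖x‖ ^ n)) := by
  haveI : Nontrivial (Euc n) := nontrivial_of_ne (EuclideanSpace.single ⟨0, hn⟩ (1 : ℝ)) 0 (by
    intro h
    have := congrArg (fun v : Euc n => v ⟨0, hn⟩) h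
    simp at this)
  haveI : NullSingletonClass (volume : Measure (Euc n)) := inferInstance
  set γ := unitBallVol n with hγdef
  have hγ : 0 < γ :=
    ENNReal.toReal_pos (Metric.measure_ball_pos volume (0 : Euc n) one_pos).ne' measure_ball_lt_top.ne
  have hnne : (n : ℝ) ≠ 0 := by positivity
  -- volume of balls
  have hvol : ∀ r : ℝ, 0 ≤ r →
      volume (Metric.ball (0 : Euc n) r) = ENNReal.ofReal (γ * r ^ n) := by
    intro r hr
    calc volume (Metric.ball (0 : Euc n) r)
        = ENNReal.ofReal (r ^ Module.finrank ℝ (Euc n)) * volume (Metric.ball (0 : Euc n) 1) :=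
          Measure.addHaar_ball volume 0 hr
      _ = ENNReal.ofReal (r ^ n) * ENNReal.ofReal γ := by
          rw [finrank_euclideanSpace_fin, hγdef, unitBallVol,
            ENNReal.ofReal_toReal measure_ball_lt_top.ne]
      _ = ENNReal.ofReal (γ * r ^ n) := by
          rw [← ENNReal.ofReal_mul (pow_nonneg hr n), mul_comm]
  set rad : ℝ → ℝ := fun a => (a / γ) ^ ((1 : ℝ) / (n : ℝ)) with hrad
  have hradpos : ∀ a : ℝ, 0 < a → 0 < rad a := fun a ha =>
    Real.rpow_pos_of_pos (div_pos ha hγ) _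
  have hradpow : ∀ a : ℝ, 0 < a → γ * rad a ^ n = a := by
    intro a ha
    have h1 : rad a ^ n = a / γ := by
      rw [hrad]
      dsimp only
      rw [← Real.rpow_natCast ((a / γ) ^ ((1 : ℝ) / (n : ℝ))) n,
        ← Real.rpow_mul (div_pos ha hγ).le]
      rw [show (1 : ℝ) / (n : ℝ) * n = 1 by field_simp, Real.rpow_one]
    rw [h1]
    field_simp
  have hball : ∀ a : ℝ, 0 < a →
      volume (Metric.ball (0 : Euc n) (rad a)) = ENNReal.ofReal a := by
    intro a ha
    rw [hvol _ (hradpos a ha).le, hradpow a ha]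
  have hmem : ∀ (x : Euc n) (a : ℝ), 0 < a →
      (γ * ‖x‖ ^ n < a ↔ x ∈ Metric.ball (0 : Euc n) (rad a)) := by
    intro x a ha
    rw [mem_ball_zero_iff]
    constructor
    · intro h
      by_contra h'
      push_neg at h'
      have h2 : rad a ^ n ≤ ‖x‖ ^ n := pow_le_pow_left₀ (hradpos a ha).le h' n
      nlinarith [hradpow a ha, hγ]
    · intro h
      have h2 : ‖x‖ ^ n < rad a ^ n :=
        pow_lt_pow_left₀ h (norm_nonneg x) (by omega)
      nlinarith [hradpow a ha, hγ]
  have hrad1 : γ ^ (-(1 : ℝ) / (n : ℝ)) = rad 1 := by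
    rw [hrad]
    dsimp only
    rw [neg_div, Real.rpow_neg hγ.le, ← Real.inv_rpow hγ.le, one_div γ]
  set B := Metric.ball (0 : Euc n) (γ ^ (-(1 : ℝ) / (n : ℝ))) with hB
  have hBmem : ∀ x : Euc n, x ∈ B ↔ γ * ‖x‖ ^ n < 1 := by
    intro x
    rw [hB, hrad1]
    exact (hmem x 1 one_pos).symm
  set F : ℝ → ℝ := fun a => ∫ s in Ioc a 1, g s * s ^ ((1 : ℝ) / n - 1) with hF
  set f : ℝ → ℝ := fun s => g s * s ^ ((1 : ℝ) / n - 1) with hf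
  have hFf : ∀ a : ℝ, F a = ∫ s in Ioc a 1, f s := fun a => rfl
  have hfc : ContinuousOn f (Ioc 0 1) :=
    hg.mul (continuousOn_id.rpow_const fun s hs => Or.inl hs.1.ne')
  have hfnn : ∀ s ∈ Ioc (0 : ℝ) 1, 0 ≤ f s := fun s hs =>
    mul_nonneg (hg0 s hs) (Real.rpow_nonneg hs.1.le _)
  have hInt : ∀ a : ℝ, 0 < a → IntegrableOn f (Icc a 1) := fun a ha =>
    (hfc.mono fun s hs => ⟨ha.trans_le hs.1, hs.2⟩).integrableOn_compact isCompact_Icc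
  have hFnn : ∀ a : ℝ, 0 ≤ a → 0 ≤ F a := fun a ha =>
    setIntegral_nonneg measurableSet_Ioc fun s hs => hfnn s ⟨ha.trans_lt hs.1, hs.2⟩
  have hu_eq : ∀ x : Euc n, u x = F (γ * ‖x‖ ^ n) := hu
  have hunn : ∀ x : Euc n, 0 ≤ u x := fun x => by
    rw [hu_eq x]; exact hFnn _ (by positivity)
  have habs : ∀ x : Euc n, |u x| = u x := fun x => abs_of_nonneg (hunn x)
  have hanti : ∀ a b : ℝ, 0 < a → a ≤ b → b ≤ 1 → F b ≤ F a := by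
    intro a b ha hab hb1
    have hsplit : F a = (∫ s in Ioc a b, f s) + F b := by
      rw [hFf a, hFf b, ← Ioc_union_Ioc_eq_Ioc hab hb1]
      exact setIntegral_union (Ioc_disjoint_Ioc_of_le le_rfl) measurableSet_Ioc
        ((hInt a ha).mono_set fun s hs => ⟨hs.1.le, hs.2.trans hb1⟩)
        ((hInt a ha).mono_set fun s hs => ⟨hab.trans hs.1.le, hs.2⟩)
    have h0 : 0 ≤ ∫ s in Ioc a b, f s :=
      setIntegral_nonneg measurableSet_Ioc fun s hs =>
        hfnn s ⟨ha.trans hs.1, hs.2.trans hb1⟩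
    linarith [hsplit]
  have hFderiv : ∀ t ∈ Ioo (0 : ℝ) 1, HasDerivAt F (-f t) t := by
    intro t ht
    have hnhds : Ioc (0 : ℝ) 1 ∈ nhds t :=
      mem_nhds_iff.mpr ⟨Ioo 0 1, Ioo_subset_Ioc_self, isOpen_Ioo, ht⟩
    have hct : ContinuousAt f t := hfc.continuousAt hnhds
    have hII : IntervalIntegrable f volume t 1 := by
      have h1 := hInt t ht.1
      rw [← uIcc_of_le ht.2.le] at h1
      exact h1.intervalIntegrable
    have hmeasF : StronglyMeasurableAtFilter f (nhds t) :=
      ⟨Ioc 0 1, hnhds, hfc.aestronglyMeasurable measurableSet_Ioc⟩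
    have H := intervalIntegral.integral_hasDerivAt_left hII hmeasF hct
    refine H.congr_of_eventuallyEq ?_
    filter_upwards [Iio_mem_nhds ht.2] with s hs
    rw [intervalIntegral.integral_of_le (le_of_lt hs), hFf s]
  -- Part (a)
  constructor
  · intro t ht
    have hRHS : (∫ s in Ioc t 1, s ^ ((1 : ℝ) / n) * g s / s) = F t := by
      rw [hFf t]
      refine setIntegral_congr_fun measurableSet_Ioc fun s hs => ?_
      have hs0 : (0 : ℝ) < s := ht.1.trans hs.1
      show s ^ ((1 : ℝ) / n) * g s / s = g s * s ^ ((1 : ℝ) / n - 1)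
      rw [Real.rpow_sub hs0, Real.rpow_one]
      ring
    rw [hRHS]
    have hmemFt : F t ∈ {l : ℝ | 0 ≤ l ∧
        (volume.restrict B) {x | l < |u x|} ≤ ENNReal.ofReal t} := by
      refine ⟨hFnn t ht.1.le, ?_⟩
      have hsub : {x : Euc n | F t < |u x|} ∩ B ⊆ Metric.ball 0 (rad t) := by
        rintro x ⟨hx1, hx2⟩
        rw [mem_setOf_eq] at hx1
        refine (hmem x t ht.1).mp ?_
        by_contra hge
        push_neg at hge
        have hs1 : γ * ‖x‖ ^ n < 1 := (hBmem x).mp hx2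
        have h2 : F (γ * ‖x‖ ^ n) ≤ F t := hanti t (γ * ‖x‖ ^ n) ht.1 hge hs1.le
        rw [habs x, hu_eq x] at hx1
        exact absurd hx1 (not_lt.mpr h2)
      calc (volume.restrict B) {x : Euc n | F t < |u x|}
          = volume ({x : Euc n | F t < |u x|} ∩ B) :=
            Measure.restrict_apply' Metric.isOpen_ball.measurableSet
        _ ≤ volume (Metric.ball (0 : Euc n) (rad t)) := measure_mono hsub
        _ = ENNReal.ofReal t := hball t ht.1
    have hlb : ∀ l ∈ {l : ℝ | 0 ≤ l ∧
        (volume.restrict B) {x | l < |u x|} ≤ ENNReal.ofReal t}, F t ≤ l := by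
      rintro l ⟨hl0, hlμ⟩
      by_contra hlt
      push_neg at hlt
      have hcF : ContinuousAt F t := (hFderiv t ht).continuousAt
      have hev : ∀ᶠ s in nhds t, l < F s := hcF.eventually_const_lt hlt
      have hev3 := (hev.and (Iio_mem_nhds ht.2)).filter_mono
        (nhdsWithin_le_nhds (s := Ioi t))
      obtain ⟨t', ⟨hFt', ht'1⟩, htt'⟩ := (hev3.and self_mem_nhdsWithin).exists
      have ht'0 : (0 : ℝ) < t' := ht.1.trans htt'
      have hsub2 : Metric.ball (0 : Euc n) (rad t') \ {0} ⊆
          {x : Euc n | l < |u x|} ∩ B := by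
        rintro x ⟨hx1, hx2⟩
        have hxne : x ≠ 0 := fun h => hx2 (by simp [h])
        have hs : γ * ‖x‖ ^ n < t' := (hmem x t' ht'0).mpr hx1
        have hspos : 0 < γ * ‖x‖ ^ n :=
          mul_pos hγ (pow_pos (norm_pos_iff.mpr hxne) n)
        refine ⟨?_, (hBmem x).mpr (hs.trans ht'1)⟩
        show l < |u x|
        rw [habs x, hu_eq x]
        have h3 : F t' ≤ F (γ * ‖x‖ ^ n) := hanti _ _ hspos hs.le ht'1.le
        linarith
      have hle : ENNReal.ofReal t' ≤ ENNReal.ofReal t := by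
        calc ENNReal.ofReal t'
            = volume (Metric.ball (0 : Euc n) (rad t') \ {0}) := by
              rw [measure_diff_null (measure_singleton 0)]
              exact (hball t' ht'0).symm
          _ ≤ volume ({x : Euc n | l < |u x|} ∩ B) := measure_mono hsub2
          _ = (volume.restrict B) {x : Euc n | l < |u x|} :=
              (Measure.restrict_apply' Metric.isOpen_ball.measurableSet).symm
          _ ≤ ENNReal.ofReal t := hlμ
      rw [ENNReal.ofReal_le_ofReal_iff ht.1.le] at hle
      linarith [htt', hle]
    exact le_antisymm (csInf_le ⟨F t, hlb⟩ hmemFt) (le_csInf ⟨F t, hmemFt⟩ hlb)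
  -- Part (b)
  · intro x hxB hx0
    have hr : 0 < ‖x‖ := norm_pos_iff.mpr hx0
    have hs0pos : 0 < γ * ‖x‖ ^ n := mul_pos hγ (pow_pos hr n)
    have hs0lt : γ * ‖x‖ ^ n < 1 := (hBmem x).mp hxB
    have hF' : HasDerivAt F (-f (γ * ‖x‖ ^ n)) (γ * ‖x‖ ^ n) :=
      hFderiv _ ⟨hs0pos, hs0lt⟩
    have hnd : DifferentiableAt ℝ (fun y : Euc n => ‖y‖) x :=
      differentiableAt_id.norm ℝ hx0
    set N := fderiv ℝ (fun y : Euc n => ‖y‖) x with hN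
    have hNd : HasFDerivAt (fun y : Euc n => ‖y‖) N x := hnd.hasFDerivAt
    have hNnorm : ‖N‖ = 1 := norm_fderiv_norm hnd
    have hpow : HasDerivAt (fun s : ℝ => γ * s ^ n)
        (γ * ((n : ℝ) * ‖x‖ ^ (n - 1))) ‖x‖ := (hasDerivAt_pow n ‖x‖).const_mul γ
    have hφ : HasFDerivAt (fun y : Euc n => γ * ‖y‖ ^ n)
        ((γ * ((n : ℝ) * ‖x‖ ^ (n - 1))) • N) x := hpow.comp_hasFDerivAt x hNd
    have huD : HasFDerivAt u
        ((-f (γ * ‖x‖ ^ n)) • ((γ * ((n : ℝ) * ‖x‖ ^ (n - 1))) • N)) x := by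
      have h1 := hF'.comp_hasFDerivAt x hφ
      have h2 : u = F ∘ fun y : Euc n => γ * ‖y‖ ^ n := funext fun y => hu_eq y
      rw [h2]
      exact h1
    refine ⟨huD.differentiableAt, ?_⟩
    rw [huD.fderiv, norm_smul, norm_smul, hNnorm, mul_one, Real.norm_eq_abs,
      Real.norm_eq_abs]
    have hgnn : 0 ≤ g (γ * ‖x‖ ^ n) := hg0 _ ⟨hs0pos, hs0lt.le⟩
    have habsf : |(-f (γ * ‖x‖ ^ n))| = g (γ * ‖x‖ ^ n) * (γ * ‖x‖ ^ n) ^ ((1 : ℝ) / n - 1) := by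
      rw [abs_neg, hf]
      exact abs_of_nonneg (mul_nonneg hgnn (Real.rpow_nonneg hs0pos.le _))
    have habsc : |γ * ((n : ℝ) * ‖x‖ ^ (n - 1))| = γ * ((n : ℝ) * ‖x‖ ^ (n - 1)) :=
      abs_of_nonneg (by positivity)
    rw [habsf, habsc]
    -- algebra
    have h1 : (γ * ‖x‖ ^ n) ^ ((1 : ℝ) / n - 1)
        = γ ^ ((1 : ℝ) / n - 1) * ‖x‖ ^ ((1 : ℝ) - n) := by
      rw [Real.mul_rpow hγ.le (pow_nonneg hr.le n), ← Real.rpow_natCast ‖x‖ n,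
        ← Real.rpow_mul hr.le]
      congr 1
      field_simp
    have h3 : (‖x‖ : ℝ) ^ (n - 1) = ‖x‖ ^ ((n : ℝ) - 1) := by
      rw [← Real.rpow_natCast ‖x‖ (n - 1), Nat.cast_sub hn, Nat.cast_one]
    have h2 : ‖x‖ ^ ((1 : ℝ) - n) * ‖x‖ ^ ((n : ℝ) - 1) = 1 := by
      rw [← Real.rpow_add hr]
      norm_num
    have h4 : γ ^ ((1 : ℝ) / n - 1) * γ = γ ^ ((1 : ℝ) / n) := by
      nth_rewrite 2 [← Real.rpow_one γ]
      rw [← Real.rpow_add hγ]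
      norm_num
    calc g (γ * ‖x‖ ^ n) * (γ * ‖x‖ ^ n) ^ ((1 : ℝ) / n - 1)
          * (γ * ((n : ℝ) * ‖x‖ ^ (n - 1)))
        = (n : ℝ) * ((γ ^ ((1 : ℝ) / n - 1) * γ)
            * (‖x‖ ^ ((1 : ℝ) - n) * ‖x‖ ^ ((n : ℝ) - 1))) * g (γ * ‖x‖ ^ n) := by
          rw [h1, h3]; ring
      _ = (n : ℝ) * γ ^ ((1 : ℝ) / n) * g (γ * ‖x‖ ^ n) := by
          rw [h2, h4]; ring
end
end

section
/- Let n ≥ 2, let 1 < s < n/(n−1), let t > 1 satisfy s > (t−1)/(n−1), and set r = nt / ((n−1)s + 1 − t). Then 1 < t < r, and there is NO constant c > 0 such that ( ∫₀^1 ( ∫_x^1 u^{−(n−1)s/n} g(u) du )^r dx )^{1/r} ≤ c ( ∫₀^1 g(u)^t du )^{1/t} holds for all measurable g : (0,1) → [0, ∞). Equivalently, the Hardy-type operator Hg(x) = ∫_x^1 u^{−(n−1)s/n} g(u) du is not bounded from L^t(0,1) to L^r(0,1). -/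
open MeasureTheory Set
open scoped ENNReal NNReal

noncomputable section

set_option maxHeartbeats 2000000 in
/-- Let `n ≥ 2`, `1 < s < n/(n−1)`, `t > 1` with `s > (t−1)/(n−1)`, and
`r = nt/((n−1)s + 1 − t)`. Then `1 < t < r`, and the Hardy-type operator
`Hg(x) = ∫ₓ¹ u^{−(n−1)s/n} g(u) du` is NOT bounded from `L^t(0,1)` to
`L^r(0,1)`. -/
theorem stmt15 (n : ℕ) (hn : 2 ≤ n) (s t : ℝ) (hs1 : 1 < s)
    (hs2 : s < (n : ℝ) / ((n : ℝ) - 1)) (ht : 1 < t)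
    (hst : (t - 1) / ((n : ℝ) - 1) < s) :
    ∀ r : ℝ, r = (n : ℝ) * t / (((n : ℝ) - 1) * s + 1 - t) →
      (1 < t ∧ t < r) ∧
      ¬ ∃ c : ℝ, 0 < c ∧ ∀ g : ℝ → ℝ, Measurable g → (∀ u ∈ Ioo (0 : ℝ) 1, 0 ≤ g u) →
          (∫ x in Ioo (0 : ℝ) 1,
              (∫ u in Ioc x 1, u ^ (-((n : ℝ) - 1) * s / n) * g u) ^ r) ^ (1 / r)
            ≤ c * (∫ u in Ioo (0 : ℝ) 1, g u ^ t) ^ (1 / t) := by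
  intro r hr
  have hN2 : (2:ℝ) ≤ (n:ℝ) := by exact_mod_cast hn
  set N : ℝ := (n : ℝ) with hNdef
  have hN1 : (0:ℝ) < N - 1 := by linarith
  have hN0 : (0:ℝ) < N := by linarith
  have ht0 : (0:ℝ) < t := by linarith
  have hsN : s * (N - 1) < N := (lt_div_iff₀ hN1).mp hs2
  have hD : 0 < (N - 1) * s + 1 - t := by
    have h1 : t - 1 < s * (N - 1) := (div_lt_iff₀ hN1).mp hst
    nlinarith
  have hr0 : 0 < r := by rw [hr]; positivity
  have htr : t < r := by
    rw [hr, lt_div_iff₀ hD]; nlinarith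
  refine ⟨⟨ht, htr⟩, ?_⟩
  rintro ⟨c, hc, hineq⟩
  set α : ℝ := (N - 1) * s / N with hαdef
  have hα0 : 0 ≤ α := div_nonneg (by nlinarith) hN0.le
  set e : ℝ := 1 / r + 1 - α - 1 / t with hedef
  have h1r : 1 / r = ((N - 1) * s + 1 - t) / (N * t) := by
    rw [hr, one_div_div]
  have he : e < 0 := by
    have heq : e = ((1 - t) * (N - 1) * (s - 1)) / (N * t) := by
      rw [hedef, h1r, hαdef]; field_simp; ring
    rw [heq]
    apply div_neg_of_neg_of_pos
    · have hpos : 0 < (t - 1) * ((N - 1) * (s - 1)) :=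
        mul_pos (by linarith) (mul_pos hN1 (by linarith))
      nlinarith
    · exact mul_pos hN0 ht0
  set M : ℝ := 2 ^ α * c + 1 with hMdef
  have h2α : (0:ℝ) < 2 ^ α := Real.rpow_pos_of_pos two_pos α
  have hM0 : 0 < M := by nlinarith
  set ε : ℝ := min (1/4) (M ^ e⁻¹) with hεdef
  have hε0 : 0 < ε := lt_min (by norm_num) (Real.rpow_pos_of_pos hM0 _)
  have hε4 : ε ≤ 1/4 := min_le_left _ _
  have hε2 : 2 * ε < 1 := by linarith
  have hεe : 2 ^ α * c < ε ^ e := by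
    have h1 : (M ^ e⁻¹) ^ e = M := Real.rpow_inv_rpow hM0.le he.ne
    have h2 : (M ^ e⁻¹) ^ e ≤ ε ^ e :=
      Real.rpow_le_rpow_of_nonpos hε0 (min_le_right _ _) he.le
    rw [h1] at h2
    nlinarith
  set S : Set ℝ := Ioc ε (2 * ε) with hSdef
  have hSm : MeasurableSet S := measurableSet_Ioc
  set g : ℝ → ℝ := S.indicator (fun _ => (1:ℝ)) with hgdef
  set h : ℝ → ℝ := S.indicator (fun u => u ^ (-α)) with hhdef
  have hgm : Measurable g := measurable_const.indicator hSm
  have hgnn : ∀ u ∈ Ioo (0:ℝ) 1, 0 ≤ g u := fun u _ =>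
    Set.indicator_nonneg (fun _ _ => zero_le_one) u
  have hpow : ∀ u : ℝ, u ^ (-(N - 1) * s / N) * g u = h u := by
    intro u
    have hEq : -(N - 1) * s / N = -α := by rw [hαdef]; ring
    rw [hEq]
    by_cases hu : u ∈ S
    · simp [hgdef, hhdef, Set.indicator_of_mem hu]
    · simp [hgdef, hhdef, Set.indicator_of_notMem hu]
  have hgt : ∀ u : ℝ, g u ^ t = S.indicator (fun _ => (1:ℝ)) u := by
    intro u
    by_cases hu : u ∈ S
    · simp [hgdef, Set.indicator_of_mem hu]
    · simp [hgdef, Set.indicator_of_notMem hu, Real.zero_rpow ht0.ne']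
  have hSsub : S ⊆ Ioo (0:ℝ) 1 := fun u hu => ⟨hε0.trans hu.1, lt_of_le_of_lt hu.2 hε2⟩
  have hRHS : (∫ u in Ioo (0:ℝ) 1, S.indicator (fun _ => (1:ℝ)) u) = ε := by
    rw [setIntegral_indicator hSm, inter_eq_self_of_subset_right hSsub,
      setIntegral_const, hSdef, Real.volume_real_Ioc_of_le (by linarith : ε ≤ 2 * ε),
      smul_eq_mul, mul_one]
    ring
  have hI_int : IntegrableOn (fun u : ℝ => u ^ (-α)) S := by
    apply (ContinuousOn.integrableOn_Icc ?_).mono_set Ioc_subset_Icc_self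
    intro x hx
    have hx0 : x ≠ 0 := by
      have : ε ≤ x := hx.1
      intro h0; rw [h0] at this; linarith
    exact (Real.continuousAt_rpow_const x (-α) (Or.inl hx0)).continuousWithinAt
  have hh_int : Integrable h := hI_int.integrable_indicator hSm
  have hhnn : ∀ u, 0 ≤ h u := fun u =>
    Set.indicator_nonneg (fun v hv => Real.rpow_nonneg (hε0.trans hv.1).le _) u
  set I : ℝ := ∫ u in S, u ^ (-α) with hIdef
  have hI0 : 0 ≤ I := setIntegral_nonneg hSm fun u hu =>
    Real.rpow_nonneg (hε0.trans hu.1).le _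
  set inner : ℝ → ℝ := fun x => ∫ u in Ioc x 1, h u with hinnerdef
  have hinn_nn : ∀ x, 0 ≤ inner x := fun x =>
    setIntegral_nonneg measurableSet_Ioc fun u _ => hhnn u
  have hinn_anti : Antitone inner := fun x y hxy =>
    setIntegral_mono_set hh_int.integrableOn (ae_of_all _ hhnn)
      (HasSubset.Subset.eventuallyLE (Ioc_subset_Ioc_left hxy))
  have hinn_le : ∀ x, inner x ≤ I := by
    intro x
    have h1 : inner x ≤ ∫ u, h u := setIntegral_le_integral hh_int (ae_of_all _ hhnn)
    have h2 : (∫ u, h u) = I := by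
      rw [hhdef, integral_indicator hSm]
    linarith
  have hFmeas : Measurable (fun x => inner x ^ r) :=
    (Real.continuous_rpow_const hr0.le).measurable.comp hinn_anti.measurable
  have hF_int : IntegrableOn (fun x => inner x ^ r) (Ioo (0:ℝ) 1) := by
    apply Measure.integrableOn_of_bounded (M := I ^ r) measure_Ioo_lt_top.ne
      hFmeas.aestronglyMeasurable
    refine ae_of_all _ fun x => ?_
    rw [Real.norm_eq_abs, abs_of_nonneg (Real.rpow_nonneg (hinn_nn x) r)]
    exact Real.rpow_le_rpow (hinn_nn x) (hinn_le x) hr0.le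
  have hstep0 : (∫ x in Ioo (0:ℝ) ε, inner x ^ r) = ε * I ^ r := by
    have hxI : ∀ x ∈ Ioo (0:ℝ) ε, inner x ^ r = I ^ r := by
      intro x hx
      have hsub : S ⊆ Ioc x 1 := fun u hu =>
        ⟨hx.2.trans hu.1, hu.2.trans (by linarith)⟩
      have : inner x = I := by
        rw [hinnerdef]
        show (∫ u in Ioc x 1, h u) = I
        rw [hhdef]
        show (∫ u in Ioc x 1, S.indicator (fun u => u ^ (-α)) u) = I
        rw [setIntegral_indicator hSm, inter_eq_self_of_subset_right hsub]
      rw [this]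
    rw [setIntegral_congr_fun measurableSet_Ioo hxI, setIntegral_const,
      Real.volume_real_Ioo_of_le hε0.le, sub_zero, smul_eq_mul]
  have hstep1 : (∫ x in Ioo (0:ℝ) ε, inner x ^ r) ≤ ∫ x in Ioo (0:ℝ) 1, inner x ^ r :=
    setIntegral_mono_set hF_int
      (ae_of_all _ fun x => Real.rpow_nonneg (hinn_nn x) r)
      (HasSubset.Subset.eventuallyLE (Ioo_subset_Ioo_right (by linarith)))
  have hILB : ε * (2 * ε) ^ (-α) ≤ I := by
    have hconst : (∫ _u in S, ((2 * ε) ^ (-α) : ℝ)) = ε * (2 * ε) ^ (-α) := by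
      rw [setIntegral_const, hSdef, Real.volume_real_Ioc_of_le (by linarith : ε ≤ 2 * ε),
        smul_eq_mul]
      ring
    rw [hIdef, ← hconst]
    apply setIntegral_mono_on (integrableOn_const measure_Ioc_lt_top.ne) hI_int hSm
    intro u hu
    exact Real.rpow_le_rpow_of_nonpos (hε0.trans hu.1) hu.2 (neg_nonpos.mpr hα0)
  -- apply the hypothesis inequality to g
  have key := hineq g hgm hgnn
  simp only [hpow, hgt, hRHS] at key
  -- lower bound for the left-hand side
  have hA0 : 0 ≤ ε * (2 * ε) ^ (-α) :=
    mul_nonneg hε0.le (Real.rpow_nonneg (by linarith) _)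
  clear_value N α e M ε S g h I
  have hLB : ε ^ (1/r) * (ε * (2 * ε) ^ (-α)) ≤
      (∫ x in Ioo (0:ℝ) 1, inner x ^ r) ^ (1/r) := by
    have h1 : ε * (ε * (2 * ε) ^ (-α)) ^ r ≤ ∫ x in Ioo (0:ℝ) 1, inner x ^ r := by
      have hm : ε * (ε * (2 * ε) ^ (-α)) ^ r ≤ ε * I ^ r := by
        apply mul_le_mul_of_nonneg_left _ hε0.le
        exact Real.rpow_le_rpow hA0 hILB hr0.le
      have hs1' := hstep1
      rw [hstep0] at hs1'
      linarith
    have h2 : (ε * (ε * (2 * ε) ^ (-α)) ^ r) ^ (1/r) ≤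
        (∫ x in Ioo (0:ℝ) 1, inner x ^ r) ^ (1/r) :=
      Real.rpow_le_rpow (mul_nonneg hε0.le (Real.rpow_nonneg hA0 r)) h1
        (le_of_lt (one_div_pos.mpr hr0))
    have h3 : (ε * (ε * (2 * ε) ^ (-α)) ^ r) ^ (1/r) =
        ε ^ (1/r) * (ε * (2 * ε) ^ (-α)) := by
      rw [Real.mul_rpow hε0.le (Real.rpow_nonneg hA0 r),
        ← Real.rpow_mul hA0, mul_one_div_cancel hr0.ne', Real.rpow_one]
    rw [← h3]
    exact h2
  have hfin : ε ^ (1/r) * (ε * (2 * ε) ^ (-α)) ≤ c * ε ^ (1/t) := le_trans hLB key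
  -- algebraic contradiction
  have h2ε : (2 * ε : ℝ) ^ (-α) = 2 ^ (-α) * ε ^ (-α) := Real.mul_rpow (by norm_num) hε0.le
  have hPt : 0 < ε ^ (1/t) := Real.rpow_pos_of_pos hε0 _
  have hprod : ε ^ (1/r) * (ε * (2 * ε) ^ (-α)) = ε ^ e * ε ^ (1/t) * 2 ^ (-α) := by
    rw [h2ε, ← Real.rpow_add hε0 e (1/t)]
    have hrearr : ε ^ (1/r) * (ε * (2 ^ (-α) * ε ^ (-α))) =
        ε ^ (1/r) * ε ^ (1:ℝ) * ε ^ (-α) * 2 ^ (-α) := by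
      rw [Real.rpow_one]; ring
    rw [hrearr, ← Real.rpow_add hε0, ← Real.rpow_add hε0]
    congr 1
    rw [hedef]; ring
  rw [hprod] at hfin
  have h2neg : (2:ℝ) ^ (-α) = (2 ^ α)⁻¹ := Real.rpow_neg (by norm_num) α
  rw [h2neg] at hfin
  have hfin2 : ε ^ e * ε ^ (1/t) ≤ c * ε ^ (1/t) * 2 ^ α := by
    calc ε ^ e * ε ^ (1/t) = ε ^ e * ε ^ (1/t) * (2 ^ α)⁻¹ * 2 ^ α := by
          field_simp
      _ ≤ c * ε ^ (1/t) * 2 ^ α := mul_le_mul_of_nonneg_right hfin h2α.le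
  nlinarith [hεe, hPt, hfin2]
end
end
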